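/- arXiv:1304.6371 — 8 statements merged into one kernel-verified Lean document; each statement's English description precedes it below -/
import Mathlib

section
/- Let (R, ⊕, ·) be a semihyperring. If λ and μ are fuzzy hyperideals of R, then their product λμ is a fuzzy hyperideal of R. -/
/-- The unit interval `[0,1]` is a complete lattice. -/
noncomputable instance : Fact ((0:ℝ) ≤ 1) := ⟨zero_le_one⟩

/-- A semihyperring `(R, ⊕, ·)`: a hyperoperation `hadd` (with nonempty values),
a binary multiplication `mul`, and an element `zero`, satisfying commutativity and
(extended) associativity of `⊕`, associativity of `·`, two-sided distributivity of
`·` over `⊕` (as sets), and `0 ⊕ x = {x}`, `0·x = 0 = x·0`. -/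
class Semihyperring (R : Type*) where
  hadd : R → R → Set R
  mul : R → R → R
  zero : R
  hadd_nonempty : ∀ x y : R, (hadd x y).Nonempty
  hadd_comm : ∀ x y : R, hadd x y = hadd y x
  hadd_assoc : ∀ x y z : R, (⋃ w ∈ hadd y z, hadd x w) = ⋃ w ∈ hadd x y, hadd w z
  mul_assoc : ∀ x y z : R, mul (mul x y) z = mul x (mul y z)
  left_distrib : ∀ x y z : R, (fun w => mul x w) '' hadd y z = hadd (mul x y) (mul x z)
  right_distrib : ∀ x y z : R, (fun w => mul w z) '' hadd x y = hadd (mul x z) (mul y z)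
  zero_hadd : ∀ x : R, hadd zero x = {x}
  hadd_zero : ∀ x : R, hadd x zero = {x}
  zero_mul : ∀ x : R, mul zero x = zero
  mul_zero : ∀ x : R, mul x zero = zero

namespace Semihyperring

variable {R : Type*} [Semihyperring R]

/-- The hyperoperation `⊕` extended to subsets: `A ⊕ B = ⋃ {a ⊕ b : a ∈ A, b ∈ B}`. -/
def haddSet (A B : Set R) : Set R := ⋃ a ∈ A, ⋃ b ∈ B, hadd a b

/-- The hypersum `x₁ ⊕ x₂ ⊕ ⋯ ⊕ xₚ` of a list of elements (the empty hypersum is `{0}`,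
which is neutral since `0 ⊕ x = {x}`). -/
def hsumList : List R → Set R
  | [] => {zero}
  | x :: xs => haddSet {x} (hsumList xs)

/-- A (two-sided) hyperideal: a nonempty subset closed under `⊕` and under
multiplication by arbitrary elements of `R` on both sides. -/
def IsHyperideal (I : Set R) : Prop :=
  I.Nonempty ∧ (∀ x ∈ I, ∀ y ∈ I, hadd x y ⊆ I) ∧
    (∀ r : R, ∀ x ∈ I, mul r x ∈ I ∧ mul x r ∈ I)

/-- A right hyperideal. -/
def IsRightHyperideal (I : Set R) : Prop :=
  I.Nonempty ∧ (∀ x ∈ I, ∀ y ∈ I, hadd x y ⊆ I) ∧ (∀ x ∈ I, ∀ r : R, mul x r ∈ I)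

/-- A left hyperideal. -/
def IsLeftHyperideal (I : Set R) : Prop :=
  I.Nonempty ∧ (∀ x ∈ I, ∀ y ∈ I, hadd x y ⊆ I) ∧ (∀ x ∈ I, ∀ r : R, mul r x ∈ I)

/-- The product of two subsets:
`AB = {x : x ∈ a₁b₁ ⊕ ⋯ ⊕ aₚbₚ for some p ≥ 1, aᵢ ∈ A, bᵢ ∈ B}`. -/
def setProd (A B : Set R) : Set R :=
  {x | ∃ l : List (R × R), l ≠ [] ∧ (∀ p ∈ l, p.1 ∈ A ∧ p.2 ∈ B) ∧
    x ∈ hsumList (l.map fun p => mul p.1 p.2)}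

/-- `R` is fully idempotent if every hyperideal `I` satisfies `I² = I`. -/
def FullyIdempotent (R : Type*) [Semihyperring R] : Prop :=
  ∀ I : Set R, IsHyperideal I → setProd I I = I

/-- `R` is (von Neumann) regular if every `x` satisfies `x = x·a·x` for some `a`. -/
def Regular (R : Type*) [Semihyperring R] : Prop :=
  ∀ x : R, ∃ a : R, x = mul (mul x a) x

/-- A fuzzy hyperideal of `R`: a function `μ : R → [0,1]` with
`inf {μ z : z ∈ x ⊕ y} ≥ min (μ x) (μ y)` and `μ (x·y) ≥ max (μ x) (μ y)`. -/
def IsFuzzyHyperideal (μ : R → unitInterval) : Prop :=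
  (∀ x y : R, μ x ⊓ μ y ≤ ⨅ z ∈ hadd x y, μ z) ∧
  (∀ x y : R, μ x ⊔ μ y ≤ μ (mul x y))

/-- A fuzzy right hyperideal: `inf {λ z : z ∈ x ⊕ y} ≥ min (λ x) (λ y)` and `λ (x·y) ≥ λ x`. -/
def IsFuzzyRightHyperideal (μ : R → unitInterval) : Prop :=
  (∀ x y : R, μ x ⊓ μ y ≤ ⨅ z ∈ hadd x y, μ z) ∧
  (∀ x y : R, μ x ≤ μ (mul x y))

/-- A fuzzy left hyperideal: `inf {λ z : z ∈ x ⊕ y} ≥ min (λ x) (λ y)` and `λ (x·y) ≥ λ y`. -/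
def IsFuzzyLeftHyperideal (μ : R → unitInterval) : Prop :=
  (∀ x y : R, μ x ⊓ μ y ≤ ⨅ z ∈ hadd x y, μ z) ∧
  (∀ x y : R, μ y ≤ μ (mul x y))

/-- The product `λμ` of fuzzy subsets:
`(λμ)(x) = ⋁ { ⋀_{1≤i≤p} (λ yᵢ ⊓ μ zᵢ) : p ≥ 1, x ∈ y₁z₁ ⊕ ⋯ ⊕ yₚzₚ }`. -/
noncomputable def fprod (lam mu : R → unitInterval) (x : R) : unitInterval :=
  sSup {t | ∃ l : List (R × R), l ≠ [] ∧
    x ∈ hsumList (l.map fun p => mul p.1 p.2) ∧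
    t = ⨅ p ∈ l, lam p.1 ⊓ mu p.2}

/-- The sum `λ ⊕ μ` of fuzzy subsets:
`(λ ⊕ μ)(x) = ⋁ { λ y ⊓ μ z : x ∈ y ⊕ z }`. -/
noncomputable def fsum (lam mu : R → unitInterval) (x : R) : unitInterval :=
  sSup {t | ∃ y z : R, x ∈ hadd y z ∧ t = lam y ⊓ mu z}

/-- The composition `λ ∘ μ` of fuzzy subsets:
`(λ ∘ μ)(x) = ⋁ { λ y ⊓ μ z : x = y·z }` (with `⋁ ∅ = 0`). -/
noncomputable def fcomp (lam mu : R → unitInterval) (x : R) : unitInterval :=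
  sSup {t | ∃ y z : R, x = mul y z ∧ t = lam y ⊓ mu z}

/-- A fuzzy prime hyperideal: a fuzzy hyperideal `η` such that for all fuzzy hyperideals
`λ, μ`, `λμ ≤ η` implies `λ ≤ η` or `μ ≤ η`. -/
def IsFuzzyPrimeHyperideal (η : R → unitInterval) : Prop :=
  IsFuzzyHyperideal η ∧ ∀ lam mu : R → unitInterval, IsFuzzyHyperideal lam →
    IsFuzzyHyperideal mu → fprod lam mu ≤ η → lam ≤ η ∨ mu ≤ η

/-- A fuzzy irreducible hyperideal: a fuzzy hyperideal `η` such that for all fuzzy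
hyperideals `λ, μ`, `min (λ, μ) = η` (pointwise) implies `λ = η` or `μ = η`. -/
def IsFuzzyIrreducibleHyperideal (η : R → unitInterval) : Prop :=
  IsFuzzyHyperideal η ∧ ∀ lam mu : R → unitInterval, IsFuzzyHyperideal lam →
    IsFuzzyHyperideal mu → lam ⊓ mu = η → lam = η ∨ mu = η

/-- `FP R`: the set of proper fuzzy prime hyperideals of `R`
(`η` is proper if it is not the constant function `1`). -/
def FP (R : Type*) [Semihyperring R] : Set (R → unitInterval) :=
  {η | IsFuzzyPrimeHyperideal η ∧ η ≠ fun _ => 1}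

/-- `O λ = {μ ∈ FP R : λ ≰ μ}`. -/
def O (lam : R → unitInterval) : Set (R → unitInterval) :=
  {mu ∈ FP R | ¬ lam ≤ mu}

/-- The sum `Σᵢ ηᵢ` of an arbitrary family of fuzzy subsets:
`(Σᵢ ηᵢ)(x) = ⋁ { ⋀_{1≤k≤p} η_{i_k} (x_k) : p ≥ 1, x ∈ x₁ ⊕ ⋯ ⊕ xₚ }`. -/
noncomputable def famSum {ι : Type*} (η : ι → R → unitInterval) (x : R) : unitInterval :=
  sSup {t | ∃ l : List (ι × R), l ≠ [] ∧ x ∈ hsumList (l.map Prod.snd) ∧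
    t = ⨅ p ∈ l, η p.1 p.2}

end Semihyperring


section AuxLemmas
open Semihyperring
variable {R : Type*} [Semihyperring R]

lemma mem_haddSet' {A B : Set R} {z : R} :
    z ∈ haddSet A B ↔ ∃ a ∈ A, ∃ b ∈ B, z ∈ hadd a b := by
  simp [haddSet]

lemma haddSet_singleton_left' {x : R} {S : Set R} {z : R} :
    z ∈ haddSet {x} S ↔ ∃ b ∈ S, z ∈ hadd x b := by
  simp [haddSet]

lemma haddSet_assoc' (A B C : Set R) :
    haddSet A (haddSet B C) = haddSet (haddSet A B) C := by
  ext z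
  simp only [mem_haddSet']
  constructor
  · rintro ⟨a, ha, w, ⟨b, hb, c, hc, hw⟩, hz⟩
    have hz' : z ∈ ⋃ w ∈ hadd b c, hadd a w := by
      simp only [Set.mem_iUnion, exists_prop]; exact ⟨w, hw, hz⟩
    rw [hadd_assoc] at hz'
    simp only [Set.mem_iUnion, exists_prop] at hz'
    obtain ⟨w', hw', hz'⟩ := hz'
    exact ⟨w', ⟨a, ha, b, hb, hw'⟩, c, hc, hz'⟩
  · rintro ⟨w, ⟨a, ha, b, hb, hw⟩, c, hc, hz⟩
    have hz' : z ∈ ⋃ w ∈ hadd a b, hadd w c := by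
      simp only [Set.mem_iUnion, exists_prop]; exact ⟨w, hw, hz⟩
    rw [← hadd_assoc] at hz'
    simp only [Set.mem_iUnion, exists_prop] at hz'
    obtain ⟨w', hw', hz'⟩ := hz'
    exact ⟨a, ha, w', ⟨b, hb, c, hc, hw'⟩, hz'⟩

lemma haddSet_zero_left' (S : Set R) : haddSet {zero} S = S := by
  ext z
  simp only [mem_haddSet', Set.mem_singleton_iff]
  constructor
  · rintro ⟨a, rfl, b, hb, hz⟩
    rw [zero_hadd] at hz
    rwa [hz]
  · intro hz
    exact ⟨zero, rfl, z, hz, by rw [zero_hadd]; rfl⟩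

lemma hsumList_append' (l1 l2 : List R) :
    hsumList (l1 ++ l2) = haddSet (hsumList l1) (hsumList l2) := by
  induction l1 with
  | nil => simp [hsumList, haddSet_zero_left']
  | cons x xs ih =>
    simp only [List.cons_append, hsumList, List.append_eq, ih, haddSet_assoc']

lemma image_mul_right_hsum' (l : List R) (y : R) :
    (fun w => mul w y) '' hsumList l = hsumList (l.map fun w => mul w y) := by
  induction l with
  | nil => simp [hsumList, Semihyperring.zero_mul]
  | cons x xs ih =>
    simp only [List.map_cons, hsumList, ← ih]
    ext z
    simp only [haddSet_singleton_left', Set.mem_image]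
    constructor
    · rintro ⟨w, hw, rfl⟩
      obtain ⟨b, hb, hw⟩ := hw
      refine ⟨mul b y, ⟨b, hb, rfl⟩, ?_⟩
      rw [← Semihyperring.right_distrib]
      exact ⟨w, hw, rfl⟩
    · rintro ⟨b, ⟨b', hb', rfl⟩, hz⟩
      rw [← Semihyperring.right_distrib] at hz
      obtain ⟨w, hw, rfl⟩ := hz
      exact ⟨w, ⟨b', hb', hw⟩, rfl⟩

lemma image_mul_left_hsum' (l : List R) (y : R) :
    (fun w => mul y w) '' hsumList l = hsumList (l.map fun w => mul y w) := by
  induction l with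
  | nil => simp [hsumList, Semihyperring.mul_zero]
  | cons x xs ih =>
    simp only [List.map_cons, hsumList, ← ih]
    ext z
    simp only [haddSet_singleton_left', Set.mem_image]
    constructor
    · rintro ⟨w, hw, rfl⟩
      obtain ⟨b, hb, hw⟩ := hw
      refine ⟨mul y b, ⟨b, hb, rfl⟩, ?_⟩
      rw [← Semihyperring.left_distrib]
      exact ⟨w, hw, rfl⟩
    · rintro ⟨b, ⟨b', hb', rfl⟩, hz⟩
      rw [← Semihyperring.left_distrib] at hz
      obtain ⟨w, hw, rfl⟩ := hz
      exact ⟨w, ⟨b', hb', hw⟩, rfl⟩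

end AuxLemmas

open Semihyperring in
/-- the product of two fuzzy hyperideals of `R` is a fuzzy hyperideal of `R`. -/
theorem fprod_isFuzzyHyperideal {R : Type*} [Semihyperring R] (lam mu : R → unitInterval)
    (hlam : IsFuzzyHyperideal lam) (hmu : IsFuzzyHyperideal mu) :
    IsFuzzyHyperideal (fprod lam mu) := by
  constructor
  · -- additive condition
    intro x y
    refine le_iInf₂ fun z hz => ?_
    by_contra hlt
    push_neg at hlt
    have hx : fprod lam mu z < fprod lam mu x := lt_of_lt_of_le hlt inf_le_left
    have hy : fprod lam mu z < fprod lam mu y := lt_of_lt_of_le hlt inf_le_right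
    simp only [fprod] at hx hy
    obtain ⟨t1, ⟨l1, hl1ne, hl1mem, rfl⟩, ht1⟩ := lt_sSup_iff.mp hx
    obtain ⟨t2, ⟨l2, hl2ne, hl2mem, rfl⟩, ht2⟩ := lt_sSup_iff.mp hy
    have hzmem : z ∈ hsumList ((l1 ++ l2).map fun p => mul p.1 p.2) := by
      rw [List.map_append, hsumList_append', mem_haddSet']
      exact ⟨x, hl1mem, y, hl2mem, hz⟩
    have hle : (⨅ p ∈ l1 ++ l2, lam p.1 ⊓ mu p.2)
        ≤ sSup {t | ∃ l : List (R × R), l ≠ [] ∧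
          z ∈ hsumList (l.map fun p => mul p.1 p.2) ∧
          t = ⨅ p ∈ l, lam p.1 ⊓ mu p.2} :=
      le_sSup ⟨l1 ++ l2, by simp [hl1ne], hzmem, rfl⟩
    rw [show (⨅ p ∈ l1 ++ l2, lam p.1 ⊓ mu p.2)
        = (⨅ p ∈ l1, lam p.1 ⊓ mu p.2) ⊓ ⨅ p ∈ l2, lam p.1 ⊓ mu p.2 by
      simp only [List.mem_append, iInf_or, iInf_inf_eq]
      exact inf_inf_inf_comm _ _ _ _] at hle
    exact absurd hle (not_le.mpr (lt_inf_iff.mpr ⟨ht1, ht2⟩))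
  · -- multiplicative condition
    intro x y
    refine sup_le ?_ ?_
    · simp only [fprod]
      refine sSup_le ?_
      rintro t ⟨l, hlne, hlmem, rfl⟩
      have hmem : mul x y ∈ hsumList ((l.map fun p => (p.1, mul p.2 y)).map
          fun p => mul p.1 p.2) := by
        have h1 : mul x y ∈ (fun w => mul w y) '' hsumList (l.map fun p => mul p.1 p.2) :=
          ⟨x, hlmem, rfl⟩
        rw [image_mul_right_hsum'] at h1
        convert h1 using 2
        simp only [List.map_map]
        congr 1
        ext p
        exact (Semihyperring.mul_assoc p.1 p.2 y).symm
      refine le_trans ?_ (le_sSup ⟨l.map fun p => (p.1, mul p.2 y),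
        by simpa using hlne, hmem, rfl⟩)
      refine le_iInf₂ fun q hq => ?_
      simp only [List.mem_map] at hq
      obtain ⟨p, hp, rfl⟩ := hq
      refine (iInf₂_le p hp).trans ?_
      exact inf_le_inf le_rfl (le_sup_left.trans (hmu.2 p.2 y))
    · simp only [fprod]
      refine sSup_le ?_
      rintro t ⟨l, hlne, hlmem, rfl⟩
      have hmem : mul x y ∈ hsumList ((l.map fun p => (mul x p.1, p.2)).map
          fun p => mul p.1 p.2) := by
        have h1 : mul x y ∈ (fun w => mul x w) '' hsumList (l.map fun p => mul p.1 p.2) :=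
          ⟨y, hlmem, rfl⟩
        rw [image_mul_left_hsum'] at h1
        convert h1 using 2
        simp only [List.map_map]
        congr 1
        ext p
        exact Semihyperring.mul_assoc x p.1 p.2
      refine le_trans ?_ (le_sSup ⟨l.map fun p => (mul x p.1, p.2),
        by simpa using hlne, hmem, rfl⟩)
      refine le_iInf₂ fun q hq => ?_
      simp only [List.mem_map] at hq
      obtain ⟨p, hp, rfl⟩ := hq
      refine (iInf₂_le p hp).trans ?_
      exact inf_le_inf (le_sup_right.trans (hlam.2 x p.1)) le_rfl
end

section
/- Let (R, ⊕, ·) be a semihyperring. If λ and μ are fuzzy hyperideals of R, then their sum λ ⊕ μ is a fuzzy hyperideal of R. -/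
section Aux
open Semihyperring
variable {R : Type*} [Semihyperring R]

lemma hadd_reassoc {x y z y₁ z₁ y₂ z₂ : R}
    (hz : z ∈ hadd x y) (hx : x ∈ hadd y₁ z₁) (hy : y ∈ hadd y₂ z₂) :
    ∃ u ∈ hadd y₁ y₂, ∃ v ∈ hadd z₁ z₂, z ∈ hadd u v := by
  have h1 : z ∈ ⋃ w ∈ hadd x y₂, hadd w z₂ := by
    rw [← hadd_assoc]
    exact Set.mem_iUnion₂.2 ⟨y, hy, hz⟩
  obtain ⟨w₁, hw₁, hzw₁⟩ := Set.mem_iUnion₂.1 h1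
  have h2 : w₁ ∈ ⋃ w ∈ hadd y₂ y₁, hadd w z₁ := by
    rw [← hadd_assoc]
    exact Set.mem_iUnion₂.2 ⟨x, hx, (hadd_comm x y₂ ▸ hw₁)⟩
  obtain ⟨w₂, hw₂, hw₁'⟩ := Set.mem_iUnion₂.1 h2
  have h3 : z ∈ ⋃ w ∈ hadd z₁ z₂, hadd w₂ w := by
    rw [hadd_assoc]
    exact Set.mem_iUnion₂.2 ⟨w₁, hw₁', hzw₁⟩
  obtain ⟨v, hv, hzv⟩ := Set.mem_iUnion₂.1 h3
  exact ⟨w₂, hadd_comm y₂ y₁ ▸ hw₂, v, hv, hzv⟩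

end Aux

open Semihyperring in
/-- the sum of two fuzzy hyperideals of `R` is a fuzzy hyperideal of `R`. -/
theorem fsum_isFuzzyHyperideal {R : Type*} [Semihyperring R] (lam mu : R → unitInterval)
    (hlam : IsFuzzyHyperideal lam) (hmu : IsFuzzyHyperideal mu) :
    IsFuzzyHyperideal (fsum lam mu) := by
  constructor
  · intro x y
    refine le_iInf₂ fun z hz => ?_
    rw [fsum, fsum, sSup_inf_sSup]
    refine iSup₂_le ?_
    rintro ⟨a, b⟩ ⟨⟨y₁, z₁, hx1, rfl⟩, ⟨y₂, z₂, hy1, rfl⟩⟩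
    obtain ⟨u, hu, v, hv, hzuv⟩ := hadd_reassoc hz hx1 hy1
    have hlu : lam y₁ ⊓ lam y₂ ≤ lam u :=
      le_trans (hlam.1 y₁ y₂) (biInf_le lam hu)
    have hmv : mu z₁ ⊓ mu z₂ ≤ mu v :=
      le_trans (hmu.1 z₁ z₂) (biInf_le mu hv)
    refine le_trans ?_ (le_sSup ⟨u, v, hzuv, rfl⟩)
    calc (lam y₁ ⊓ mu z₁) ⊓ (lam y₂ ⊓ mu z₂)
        ≤ (lam y₁ ⊓ lam y₂) ⊓ (mu z₁ ⊓ mu z₂) := le_of_eq (inf_inf_inf_comm _ _ _ _)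
      _ ≤ lam u ⊓ mu v := inf_le_inf hlu hmv
  · intro x y
    refine sup_le ?_ ?_
    · refine sSup_le ?_
      rintro t ⟨y₁, z₁, hx1, rfl⟩
      have hmem : mul x y ∈ hadd (mul y₁ y) (mul z₁ y) := by
        rw [← Semihyperring.right_distrib]
        exact ⟨x, hx1, rfl⟩
      refine le_trans ?_ (le_sSup ⟨mul y₁ y, mul z₁ y, hmem, rfl⟩)
      exact inf_le_inf (le_trans le_sup_left (hlam.2 y₁ y))
        (le_trans le_sup_left (hmu.2 z₁ y))
    · refine sSup_le ?_
      rintro t ⟨y₂, z₂, hy1, rfl⟩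
      have hmem : mul x y ∈ hadd (mul x y₂) (mul x z₂) := by
        rw [← Semihyperring.left_distrib]
        exact ⟨y, hy1, rfl⟩
      refine le_trans ?_ (le_sSup ⟨mul x y₂, mul x z₂, hmem, rfl⟩)
      exact inf_le_inf (le_trans le_sup_right (hlam.2 x y₂))
        (le_trans le_sup_right (hmu.2 x z₂))
end

section
/- Let (R, ⊕, ·) be a semihyperring. Then R is fully idempotent if and only if every fuzzy hyperideal δ of R is idempotent, i.e. δδ = δ (where δδ is the product of δ with itself). -/
namespace Semihyperring

variable {R : Type*} [Semihyperring R]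

/-! ### Auxiliary lemmas -/

lemma mem_haddSet {A B : Set R} {x : R} :
    x ∈ haddSet A B ↔ ∃ a ∈ A, ∃ b ∈ B, x ∈ hadd a b := by
  simp [haddSet]

lemma haddSet_zero_left (B : Set R) : haddSet {zero} B = B := by
  ext x
  simp [mem_haddSet, zero_hadd]

lemma haddSet_assoc (A B C : Set R) :
    haddSet A (haddSet B C) = haddSet (haddSet A B) C := by
  ext x
  simp only [mem_haddSet]
  constructor
  · rintro ⟨a, ha, w, ⟨b, hb, c, hc, hw⟩, hx⟩
    have h1 : x ∈ ⋃ u ∈ hadd b c, hadd a u := Set.mem_biUnion hw hx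
    rw [hadd_assoc] at h1
    rw [Set.mem_iUnion₂] at h1
    obtain ⟨u, hu, hxu⟩ := h1
    exact ⟨u, ⟨a, ha, b, hb, hu⟩, c, hc, hxu⟩
  · rintro ⟨w, ⟨a, ha, b, hb, hw⟩, c, hc, hx⟩
    have h1 : x ∈ ⋃ u ∈ hadd a b, hadd u c := Set.mem_biUnion hw hx
    rw [← hadd_assoc] at h1
    rw [Set.mem_iUnion₂] at h1
    obtain ⟨u, hu, hxu⟩ := h1
    exact ⟨a, ha, u, ⟨b, hb, c, hc, hu⟩, hxu⟩

lemma hsumList_append (l1 l2 : List R) :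
    hsumList (l1 ++ l2) = haddSet (hsumList l1) (hsumList l2) := by
  induction l1 with
  | nil => simp [hsumList, haddSet_zero_left]
  | cons a xs ih =>
    show hsumList (a :: (xs ++ l2)) = _
    simp only [hsumList, ih, haddSet_assoc]

lemma mem_hsumList_singleton {a x : R} : x ∈ hsumList [a] ↔ x = a := by
  simp [hsumList, mem_haddSet, hadd_zero]

lemma mul_left_mem_hsum (r : R) {l : List R} {y : R} (hy : y ∈ hsumList l) :
    mul r y ∈ hsumList (l.map (mul r)) := by
  induction l generalizing y with
  | nil =>
    simp only [hsumList, Set.mem_singleton_iff] at hy ⊢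
    rw [hy, mul_zero]
    exact Set.mem_singleton zero
  | cons a xs ih =>
    rw [hsumList, mem_haddSet] at hy
    obtain ⟨a', ha', w, hw, hy⟩ := hy
    rw [show a' = a from ha'] at hy
    have h1 : mul r y ∈ (fun w => mul r w) '' hadd a w := ⟨y, hy, rfl⟩
    rw [left_distrib] at h1
    rw [List.map_cons, hsumList, mem_haddSet]
    exact ⟨mul r a, rfl, mul r w, ih hw, h1⟩

lemma mul_right_mem_hsum (r : R) {l : List R} {y : R} (hy : y ∈ hsumList l) :
    mul y r ∈ hsumList (l.map (fun a => mul a r)) := by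
  induction l generalizing y with
  | nil =>
    simp only [hsumList, Set.mem_singleton_iff] at hy ⊢
    rw [hy, zero_mul]
    exact Set.mem_singleton zero
  | cons a xs ih =>
    rw [hsumList, mem_haddSet] at hy
    obtain ⟨a', ha', w, hw, hy⟩ := hy
    rw [show a' = a from ha'] at hy
    have h1 : mul y r ∈ (fun w => mul w r) '' hadd a w := ⟨y, hy, rfl⟩
    rw [right_distrib] at h1
    rw [List.map_cons, hsumList, mem_haddSet]
    exact ⟨mul a r, rfl, mul w r, ih hw, h1⟩

lemma iInf_le_of_mem_hsumList {δ : R → unitInterval} (hδ : IsFuzzyHyperideal δ) :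
    ∀ l : List R, l ≠ [] → ∀ x ∈ hsumList l, (⨅ a ∈ l, δ a) ≤ δ x := by
  intro l
  induction l with
  | nil => simp
  | cons a xs ih =>
    intro _ x hx
    rw [hsumList, mem_haddSet] at hx
    obtain ⟨a', ha', w, hw, hx⟩ := hx
    rw [show a' = a from ha'] at hx
    rcases eq_or_ne xs [] with h | h
    · subst h
      simp only [hsumList, Set.mem_singleton_iff] at hw
      subst hw
      rw [hadd_zero, Set.mem_singleton_iff] at hx
      rw [hx]
      exact iInf₂_le a List.mem_cons_self
    · have h1 : (⨅ b ∈ xs, δ b) ≤ δ w := ih h w hw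
      have h2 : δ a ⊓ δ w ≤ δ x := le_trans (hδ.1 a w) (iInf₂_le x hx)
      refine le_trans (le_inf (iInf₂_le a List.mem_cons_self) ?_) h2
      refine le_trans ?_ h1
      exact le_iInf₂ fun b hb => iInf₂_le b (List.mem_cons_of_mem a hb)

lemma fprod_le_of_isFuzzyHyperideal {δ : R → unitInterval}
    (hδ : IsFuzzyHyperideal δ) (x : R) : fprod δ δ x ≤ δ x := by
  apply sSup_le
  rintro t ⟨l, hl, hx, rfl⟩
  have hmapne : l.map (fun p : R × R => mul p.1 p.2) ≠ [] := by
    simpa using hl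
  have h1 := iInf_le_of_mem_hsumList hδ _ hmapne x hx
  refine le_trans ?_ h1
  apply le_iInf₂
  intro a ha
  rw [List.mem_map] at ha
  obtain ⟨p, hp, rfl⟩ := ha
  exact le_trans (iInf₂_le p hp) (le_trans inf_le_sup (hδ.2 p.1 p.2))

/-- The "atoms" of the hyperideal generated by `x`. -/
def InT (x a : R) : Prop :=
  a = x ∨ (∃ r, a = mul r x) ∨ (∃ r, a = mul x r) ∨ (∃ r s, a = mul r (mul x s))

/-- The hyperideal generated by `x`. -/
def genIdeal (x : R) : Set R :=
  {y | ∃ l : List R, l ≠ [] ∧ (∀ a ∈ l, InT x a) ∧ y ∈ hsumList l}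

lemma mem_genIdeal_self (x : R) : x ∈ genIdeal x :=
  ⟨[x], by simp, by rintro a ha; simp at ha; exact Or.inl ha,
    mem_hsumList_singleton.mpr rfl⟩

lemma InT.mul_left {x a : R} (h : InT x a) (r : R) : InT x (mul r a) := by
  rcases h with rfl | ⟨r', rfl⟩ | ⟨r', rfl⟩ | ⟨r', s, rfl⟩
  · exact Or.inr (Or.inl ⟨r, rfl⟩)
  · exact Or.inr (Or.inl ⟨mul r r', (mul_assoc r r' x).symm⟩)
  · exact Or.inr (Or.inr (Or.inr ⟨r, r', rfl⟩))
  · exact Or.inr (Or.inr (Or.inr ⟨mul r r', s, (mul_assoc r r' (mul x s)).symm⟩))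

lemma InT.mul_right {x a : R} (h : InT x a) (r : R) : InT x (mul a r) := by
  rcases h with rfl | ⟨r', rfl⟩ | ⟨r', rfl⟩ | ⟨r', s, rfl⟩
  · exact Or.inr (Or.inr (Or.inl ⟨r, rfl⟩))
  · exact Or.inr (Or.inr (Or.inr ⟨r', r, mul_assoc r' x r⟩))
  · exact Or.inr (Or.inr (Or.inl ⟨mul r' r, mul_assoc x r' r⟩))
  · refine Or.inr (Or.inr (Or.inr ⟨r', mul s r, ?_⟩))
    rw [mul_assoc r' (mul x s) r, mul_assoc x s r]

lemma genIdeal_isHyperideal (x : R) : IsHyperideal (genIdeal x) := by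
  refine ⟨⟨x, mem_genIdeal_self x⟩, ?_, ?_⟩
  · rintro y ⟨l1, h1, hT1, hy⟩ z ⟨l2, h2, hT2, hz⟩ w hw
    refine ⟨l1 ++ l2, by simp [h1], ?_, ?_⟩
    · intro a ha
      rcases List.mem_append.mp ha with h | h
      exacts [hT1 a h, hT2 a h]
    · rw [hsumList_append, mem_haddSet]
      exact ⟨y, hy, z, hz, hw⟩
  · rintro r y ⟨l, hl, hT, hy⟩
    constructor
    · refine ⟨l.map (mul r), by simpa using hl, ?_, mul_left_mem_hsum r hy⟩
      rintro a ha
      rw [List.mem_map] at ha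
      obtain ⟨b, hb, rfl⟩ := ha
      exact (hT b hb).mul_left r
    · refine ⟨l.map (fun a => mul a r), by simpa using hl, ?_, mul_right_mem_hsum r hy⟩
      rintro a ha
      rw [List.mem_map] at ha
      obtain ⟨b, hb, rfl⟩ := ha
      exact (hT b hb).mul_right r

lemma le_of_InT {δ : R → unitInterval} (hδ : IsFuzzyHyperideal δ) {x a : R}
    (h : InT x a) : δ x ≤ δ a := by
  rcases h with rfl | ⟨r, rfl⟩ | ⟨r, rfl⟩ | ⟨r, s, rfl⟩
  · exact le_rfl
  · exact le_trans le_sup_right (hδ.2 r x)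
  · exact le_trans le_sup_left (hδ.2 x r)
  · exact le_trans (le_trans le_sup_left (hδ.2 x s))
      (le_trans le_sup_right (hδ.2 r (mul x s)))

lemma le_of_mem_genIdeal {δ : R → unitInterval} (hδ : IsFuzzyHyperideal δ)
    {x a : R} (h : a ∈ genIdeal x) : δ x ≤ δ a := by
  obtain ⟨l, hl, hT, ha⟩ := h
  refine le_trans ?_ (iInf_le_of_mem_hsumList hδ l hl a ha)
  exact le_iInf₂ fun b hb => le_of_InT hδ (hT b hb)

end Semihyperring

open Semihyperring in
/-- `R` is fully idempotent iff every fuzzy hyperideal `δ` of `R` is idempotent,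
i.e. `δδ = δ`. -/
theorem fullyIdempotent_iff_fuzzy_idempotent (R : Type*) [Semihyperring R] :
    FullyIdempotent R ↔
      ∀ δ : R → unitInterval, IsFuzzyHyperideal δ → fprod δ δ = δ := by
  constructor
  · -- fully idempotent ⇒ every fuzzy hyperideal is idempotent
    intro hFI δ hδ
    funext x
    apply le_antisymm
    · exact fprod_le_of_isFuzzyHyperideal hδ x
    · have hI := genIdeal_isHyperideal x
      have hx : x ∈ setProd (genIdeal x) (genIdeal x) := by
        rw [hFI _ hI]; exact mem_genIdeal_self x
      obtain ⟨l, hl, hmem, hxl⟩ := hx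
      refine le_trans ?_ (le_sSup ⟨l, hl, hxl, rfl⟩)
      refine le_iInf₂ fun p hp => ?_
      obtain ⟨h1, h2⟩ := hmem p hp
      exact le_inf (le_of_mem_genIdeal hδ h1) (le_of_mem_genIdeal hδ h2)
  · -- every fuzzy hyperideal idempotent ⇒ fully idempotent
    intro h I hI
    classical
    obtain ⟨hne, hadd_cl, hmul_cl⟩ := hI
    set χ : R → unitInterval := fun y => if y ∈ I then 1 else 0 with hχdef
    have hχI : ∀ y ∈ I, χ y = 1 := fun y hy => if_pos hy
    have hχN : ∀ y, y ∉ I → χ y = 0 := fun y hy => if_neg hy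
    have hfχ : IsFuzzyHyperideal χ := by
      constructor
      · intro a b
        by_cases ha : a ∈ I
        · by_cases hb : b ∈ I
          · refine le_iInf₂ fun z hz => ?_
            rw [hχI z (hadd_cl a ha b hb hz)]
            exact unitInterval.le_one'
          · rw [hχN b hb]
            exact le_trans inf_le_right (le_iInf₂ fun z _ => unitInterval.nonneg')
        · rw [hχN a ha]
          exact le_trans inf_le_left (le_iInf₂ fun z _ => unitInterval.nonneg')
      · intro a b
        apply sup_le
        · by_cases ha : a ∈ I
          · rw [hχI _ ((hmul_cl b a ha).2)]
            exact unitInterval.le_one'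
          · rw [hχN a ha]; exact unitInterval.nonneg'
        · by_cases hb : b ∈ I
          · rw [hχI _ ((hmul_cl a b hb).1)]
            exact unitInterval.le_one'
          · rw [hχN b hb]; exact unitInterval.nonneg'
    have hχ := h χ hfχ
    have zero_lt_one : ¬ ((1 : unitInterval) ≤ 0) := by
      intro hle
      have : (1 : ℝ) ≤ 0 := hle
      linarith
    ext x
    constructor
    · -- setProd I I ⊆ I
      rintro ⟨l, hl, hmem, hxl⟩
      have h1 : (1 : unitInterval) ≤ fprod χ χ x := by
        refine le_trans ?_ (le_sSup ⟨l, hl, hxl, rfl⟩)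
        refine le_iInf₂ fun p hp => ?_
        rw [hχI _ (hmem p hp).1, hχI _ (hmem p hp).2]
        simp
      rw [hχ] at h1
      by_contra hxI
      rw [hχN x hxI] at h1
      exact zero_lt_one h1
    · -- I ⊆ setProd I I
      intro hxI
      by_contra hxP
      have hall : ∀ t ∈ {t | ∃ l : List (R × R), l ≠ [] ∧
          x ∈ hsumList (l.map fun p => mul p.1 p.2) ∧
          t = ⨅ p ∈ l, χ p.1 ⊓ χ p.2}, t ≤ (0 : unitInterval) := by
        rintro t ⟨l, hl, hxl, rfl⟩
        by_cases hgood : ∀ p ∈ l, p.1 ∈ I ∧ p.2 ∈ I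
        · exact absurd ⟨l, hl, hgood, hxl⟩ hxP
        · push_neg at hgood
          obtain ⟨p, hp, hbad⟩ := hgood
          refine le_trans (iInf₂_le p hp) ?_
          by_cases h1 : p.1 ∈ I
          · rw [hχN p.2 (hbad h1)]
            exact inf_le_right
          · rw [hχN p.1 h1]
            exact inf_le_left
      have hle : fprod χ χ x ≤ 0 := sSup_le hall
      rw [hχ, hχI x hxI] at hle
      exact zero_lt_one hle
end

section
/- Let (R, ⊕, ·) be a semihyperring. Then R is fully idempotent if and only if for every pair of fuzzy hyperideals λ and μ of R, min(λ, μ) = λμ (pointwise minimum equals the product). -/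
section Aux
open Semihyperring
variable {R : Type*} [Semihyperring R]

lemma aux_hsumList_singleton (x : R) : hsumList [x] = {x} := by
  simp [hsumList, haddSet, hadd_zero]

lemma aux_mem_hsumList_cons {x : R} {xs : List R} {z : R} :
    z ∈ hsumList (x :: xs) ↔ ∃ w ∈ hsumList xs, z ∈ hadd x w := by
  simp [hsumList, haddSet]

/-- A set closed under `⊕` contains hypersums of nonempty lists of its elements. -/
lemma aux_hsumList_subset {I : Set R}
    (hc : ∀ x ∈ I, ∀ y ∈ I, hadd x y ⊆ I) :
    ∀ l : List R, l ≠ [] → (∀ a ∈ l, a ∈ I) → hsumList l ⊆ I := by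
  intro l
  induction l with
  | nil => intro h; exact absurd rfl h
  | cons x xs ih =>
    intro _ hmem z hz
    rcases xs with _ | ⟨y, ys⟩
    · rw [aux_hsumList_singleton] at hz
      exact hz ▸ hmem x (List.mem_cons_self)
    · rcases aux_mem_hsumList_cons.mp hz with ⟨w, hw, hzw⟩
      have hwI : w ∈ I := ih (by simp) (fun a ha => hmem a (List.mem_cons_of_mem _ ha)) hw
      exact hc x (hmem x (List.mem_cons_self)) w hwI hzw

/-- Lower bound on a fuzzy set (satisfying the ⊕-condition) over a hypersum. -/
lemma aux_le_hsumList {mu : R → unitInterval}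
    (hmu : ∀ x y : R, mu x ⊓ mu y ≤ ⨅ z ∈ hadd x y, mu z)
    {t : unitInterval} :
    ∀ l : List R, l ≠ [] → (∀ a ∈ l, t ≤ mu a) → ∀ z ∈ hsumList l, t ≤ mu z := by
  intro l
  induction l with
  | nil => intro h; exact absurd rfl h
  | cons x xs ih =>
    intro _ hmem z hz
    rcases xs with _ | ⟨y, ys⟩
    · rw [aux_hsumList_singleton] at hz
      exact hz ▸ hmem x (List.mem_cons_self)
    · rcases aux_mem_hsumList_cons.mp hz with ⟨w, hw, hzw⟩
      have hwt : t ≤ mu w := ih (by simp) (fun a ha => hmem a (List.mem_cons_of_mem _ ha)) w hw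
      have h1 : t ≤ mu x ⊓ mu w := le_inf (hmem x (List.mem_cons_self)) hwt
      calc t ≤ mu x ⊓ mu w := h1
        _ ≤ ⨅ z ∈ hadd x w, mu z := hmu x w
        _ ≤ mu z := iInf₂_le z hzw

open Classical in
/-- The characteristic function of a hyperideal is a fuzzy hyperideal. -/
lemma aux_chi_fuzzy {I : Set R} (hI : IsHyperideal I) :
    IsFuzzyHyperideal (fun y => if y ∈ I then (1 : unitInterval) else 0) := by
  obtain ⟨-, hadd_cl, hmul⟩ := hI
  constructor
  · intro x y
    by_cases hx : x ∈ I
    · by_cases hy : y ∈ I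
      · apply le_iInf₂
        intro z hz
        have : z ∈ I := hadd_cl x hx y hy hz
        simp [hx, hy, this]
      · simp [hx, hy, unitInterval.nonneg']
    · simp [hx, unitInterval.nonneg']
  · intro x y
    by_cases hx : x ∈ I
    · have : mul x y ∈ I := (hmul y x hx).2
      simp [this, unitInterval.le_one']
    · by_cases hy : y ∈ I
      · have : mul x y ∈ I := (hmul x y hy).1
        simp [this, unitInterval.le_one']
      · simp [hx, hy, unitInterval.nonneg']

end Aux

open Semihyperring in
/-- `R` is fully idempotent iff `min (λ, μ) = λμ` for every pair of fuzzy
hyperideals `λ, μ` of `R`. -/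
theorem fullyIdempotent_iff_inf_eq_fprod (R : Type*) [Semihyperring R] :
    FullyIdempotent R ↔
      ∀ lam mu : R → unitInterval, IsFuzzyHyperideal lam → IsFuzzyHyperideal mu →
        lam ⊓ mu = fprod lam mu := by
  constructor
  · -- fully idempotent → inf = fprod
    intro hFI lam mu hlam hmu
    funext x
    apply le_antisymm
    · -- lam x ⊓ mu x ≤ fprod lam mu x, via the level hyperideal
      set t := lam x ⊓ mu x with ht
      set I : Set R := {y | t ≤ lam y ∧ t ≤ mu y} with hIdef
      have hxI : x ∈ I := ⟨inf_le_left, inf_le_right⟩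
      have hIideal : IsHyperideal I := by
        refine ⟨⟨x, hxI⟩, ?_, ?_⟩
        · intro a ha b hb z hz
          constructor
          · calc t ≤ lam a ⊓ lam b := le_inf ha.1 hb.1
              _ ≤ ⨅ w ∈ hadd a b, lam w := hlam.1 a b
              _ ≤ lam z := iInf₂_le z hz
          · calc t ≤ mu a ⊓ mu b := le_inf ha.2 hb.2
              _ ≤ ⨅ w ∈ hadd a b, mu w := hmu.1 a b
              _ ≤ mu z := iInf₂_le z hz
        · intro r a ha
          constructor
          · exact ⟨le_trans (le_trans ha.1 le_sup_right) (hlam.2 r a),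
              le_trans (le_trans ha.2 le_sup_right) (hmu.2 r a)⟩
          · exact ⟨le_trans (le_trans ha.1 le_sup_left) (hlam.2 a r),
              le_trans (le_trans ha.2 le_sup_left) (hmu.2 a r)⟩
      have hx2 : x ∈ setProd I I := (hFI I hIideal).symm ▸ hxI
      obtain ⟨l, hlne, hlmem, hxsum⟩ := hx2
      apply le_sSup_of_le (b := ⨅ p ∈ l, lam p.1 ⊓ mu p.2)
      · exact ⟨l, hlne, hxsum, rfl⟩
      · apply le_iInf₂
        intro p hp
        exact le_inf (hlmem p hp).1.1 (hlmem p hp).2.2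
    · -- fprod lam mu ≤ lam ⊓ mu always
      apply sSup_le
      rintro s ⟨l, hlne, hxsum, rfl⟩
      have hmap : (l.map fun p => mul p.1 p.2) ≠ [] := by
        simpa using hlne
      have key : ∀ ν : R → unitInterval, IsFuzzyHyperideal ν →
          (∀ p ∈ l, (⨅ p ∈ l, lam p.1 ⊓ mu p.2) ≤ ν (mul p.1 p.2)) →
          (⨅ p ∈ l, lam p.1 ⊓ mu p.2) ≤ ν x := by
        intro ν hν hbound
        refine aux_le_hsumList hν.1 _ hmap ?_ x hxsum
        intro a ha
        rcases List.mem_map.mp ha with ⟨p, hp, rfl⟩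
        exact hbound p hp
      refine le_inf (key lam hlam ?_) (key mu hmu ?_)
      · intro p hp
        exact le_trans (le_trans (iInf₂_le p hp) inf_le_left)
          (le_trans le_sup_left (hlam.2 p.1 p.2))
      · intro p hp
        exact le_trans (le_trans (iInf₂_le p hp) inf_le_right)
          (le_trans le_sup_right (hmu.2 p.1 p.2))
  · -- converse
    intro H I hI
    classical
    apply Set.Subset.antisymm
    · -- setProd I I ⊆ I
      rintro x ⟨l, hlne, hlmem, hxsum⟩
      refine aux_hsumList_subset hI.2.1 _ (by simpa using hlne) ?_ hxsum
      intro a ha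
      rcases List.mem_map.mp ha with ⟨p, hp, rfl⟩
      exact (hI.2.2 p.1 p.2 (hlmem p hp).2).1
    · -- I ⊆ setProd I I
      intro x hx
      set chi : R → unitInterval := fun y => if y ∈ I then (1:unitInterval) else 0 with hchi
      have hchif := aux_chi_fuzzy (R := R) hI
      have heq := H chi chi hchif hchif
      have h1 : chi x = 1 := by simp [hchi, hx]
      have h2 : fprod chi chi x = 1 := by
        rw [← heq]; simp [h1]
      by_contra hnot
      have hle : fprod chi chi x ≤ 0 := by
        apply sSup_le
        rintro s ⟨l, hlne, hxsum, rfl⟩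
        by_cases hall : ∀ p ∈ l, p.1 ∈ I ∧ p.2 ∈ I
        · exact absurd ⟨l, hlne, hall, hxsum⟩ hnot
        · push_neg at hall
          obtain ⟨p, hp, hbad⟩ := hall
          have : chi p.1 ⊓ chi p.2 ≤ 0 := by
            by_cases h1' : p.1 ∈ I
            · have h2' : p.2 ∉ I := fun h => hbad h1' h
              simp [hchi, h2']
            · simp [hchi, h1']
          exact le_trans (iInf₂_le p hp) this
      rw [h2] at hle
      have : ((1:unitInterval):ℝ) ≤ ((0:unitInterval):ℝ) := hle
      norm_num at this
end

section
/- Let (R, ⊕, ·) be a fully idempotent semihyperring. Then for all fuzzy hyperideals λ, δ, η of R, the distributive law min(λ, δ) ⊕ η = min(λ ⊕ η, δ ⊕ η) holds (pointwise minimum and sum of fuzzy hyperideals). -/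
namespace Semihyperring

variable {R : Type*} [Semihyperring R]

lemma myLe_zero {μ : R → unitInterval} (hμ : IsFuzzyHyperideal μ) (w : R) :
    μ w ≤ μ (zero : R) := by
  have := hμ.2 w zero
  rw [mul_zero] at this
  exact le_trans le_sup_left this

lemma myLevel_hyperideal {μ : R → unitInterval} (hμ : IsFuzzyHyperideal μ) (t : unitInterval)
    (w : R) (hw : t ≤ μ w) : IsHyperideal {u | t ≤ μ u} := by
  refine ⟨⟨w, hw⟩, ?_, ?_⟩
  · intro a ha b hb z hz
    have h1 : μ a ⊓ μ b ≤ μ z := le_trans (hμ.1 a b) (biInf_le _ hz)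
    exact le_trans (le_inf ha hb) h1
  · intro r u hu
    exact ⟨le_trans hu (le_trans le_sup_right (hμ.2 r u)),
      le_trans hu (le_trans le_sup_left (hμ.2 u r))⟩

lemma myInf_fuzzy {lam delta : R → unitInterval} (h1 : IsFuzzyHyperideal lam)
    (h2 : IsFuzzyHyperideal delta) : IsFuzzyHyperideal (lam ⊓ delta) := by
  constructor
  · intro x y
    apply le_iInf₂
    intro z hz
    have a1 : lam x ⊓ lam y ≤ lam z := le_trans (h1.1 x y) (biInf_le _ hz)
    have a2 : delta x ⊓ delta y ≤ delta z := le_trans (h2.1 x y) (biInf_le _ hz)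
    simp only [Pi.inf_apply]
    exact le_inf (le_trans (inf_le_inf inf_le_left inf_le_left) a1)
      (le_trans (inf_le_inf inf_le_right inf_le_right) a2)
  · intro x y
    simp only [Pi.inf_apply]
    exact sup_le (le_inf (le_trans inf_le_left (le_trans le_sup_left (h1.2 x y)))
        (le_trans inf_le_right (le_trans le_sup_left (h2.2 x y))))
      (le_inf (le_trans inf_le_left (le_trans le_sup_right (h1.2 x y)))
        (le_trans inf_le_right (le_trans le_sup_right (h2.2 x y))))

/-- Crisp sum of two subsets. -/
def csum (A B : Set R) : Set R := {w | ∃ a ∈ A, ∃ b ∈ B, w ∈ hadd a b}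

lemma myHadd_rearrange {a₁ c₁ a₂ c₂ w₁ w₂ u : R} (h1 : w₁ ∈ hadd a₁ c₁)
    (h2 : w₂ ∈ hadd a₂ c₂) (hu : u ∈ hadd w₁ w₂) :
    ∃ s ∈ hadd a₁ a₂, ∃ c ∈ hadd c₁ c₂, u ∈ hadd s c := by
  -- step 1: u ∈ ⋃ w ∈ hadd a₂ c₂, hadd w₁ w = ⋃ w ∈ hadd w₁ a₂, hadd w c₂
  have st1 : u ∈ ⋃ w ∈ hadd w₁ a₂, hadd w c₂ := by
    rw [← hadd_assoc]
    exact Set.mem_biUnion h2 hu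
  obtain ⟨v, hv, huv⟩ := Set.mem_iUnion₂.1 st1
  -- step 2: v ∈ ⋃ w ∈ hadd a₁ c₁, hadd w a₂ = ⋃ w ∈ hadd a₁ a₂, hadd w c₁
  have st2 : v ∈ ⋃ w ∈ hadd a₁ a₂, hadd w c₁ := by
    rw [← hadd_assoc, hadd_comm a₂ c₁, hadd_assoc]
    exact Set.mem_biUnion h1 hv
  obtain ⟨s, hs, hvs⟩ := Set.mem_iUnion₂.1 st2
  -- step 3: u ∈ ⋃ w ∈ hadd s c₁, hadd w c₂ = ⋃ w ∈ hadd c₁ c₂, hadd s w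
  have st3 : u ∈ ⋃ w ∈ hadd c₁ c₂, hadd s w := by
    rw [hadd_assoc]
    exact Set.mem_biUnion hvs huv
  obtain ⟨c, hc, huc⟩ := Set.mem_iUnion₂.1 st3
  exact ⟨s, hs, c, hc, huc⟩

lemma myCsum_hyperideal {A C : Set R} (hA : IsHyperideal A) (hC : IsHyperideal C) :
    IsHyperideal (csum A C) := by
  obtain ⟨a0, ha0⟩ := hA.1
  obtain ⟨c0, hc0⟩ := hC.1
  obtain ⟨e, he⟩ := hadd_nonempty a0 c0
  refine ⟨⟨e, a0, ha0, c0, hc0, he⟩, ?_, ?_⟩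
  · rintro w₁ ⟨a₁, ha₁, c₁, hc₁, hw₁⟩ w₂ ⟨a₂, ha₂, c₂, hc₂, hw₂⟩ u hu
    obtain ⟨s, hs, c, hc, huc⟩ := myHadd_rearrange hw₁ hw₂ hu
    exact ⟨s, hA.2.1 a₁ ha₁ a₂ ha₂ hs, c, hC.2.1 c₁ hc₁ c₂ hc₂ hc, huc⟩
  · rintro r u ⟨a, ha, c, hc, hu⟩
    constructor
    · have : mul r u ∈ hadd (mul r a) (mul r c) := by
        rw [← left_distrib]; exact ⟨u, hu, rfl⟩
      exact ⟨mul r a, (hA.2.2 r a ha).1, mul r c, (hC.2.2 r c hc).1, this⟩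
    · have : mul u r ∈ hadd (mul a r) (mul c r) := by
        rw [← right_distrib]; exact ⟨u, hu, rfl⟩
      exact ⟨mul a r, (hA.2.2 r a ha).2, mul c r, (hC.2.2 r c hc).2, this⟩

lemma myMem_csum_right {A C : Set R} (h0 : (zero : R) ∈ A) {c : R} (hc : c ∈ C) :
    c ∈ csum A C := by
  refine ⟨zero, h0, c, hc, ?_⟩
  rw [zero_hadd]; exact rfl

lemma myInter_hyperideal {A B : Set R} (hA : IsHyperideal A) (hB : IsHyperideal B)
    (hne : (A ∩ B).Nonempty) : IsHyperideal (A ∩ B) := by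
  refine ⟨hne, ?_, ?_⟩
  · intro x hx y hy z hz
    exact ⟨hA.2.1 x hx.1 y hy.1 hz, hB.2.1 x hx.2 y hy.2 hz⟩
  · intro r x hx
    exact ⟨⟨(hA.2.2 r x hx.1).1, (hB.2.2 r x hx.2).1⟩,
      ⟨(hA.2.2 r x hx.1).2, (hB.2.2 r x hx.2).2⟩⟩

lemma myMem_haddSet {A B : Set R} {u : R} :
    u ∈ haddSet A B ↔ ∃ a ∈ A, ∃ b ∈ B, u ∈ hadd a b := by
  simp [haddSet]

lemma myHsumList_subset {D : Set R} (hD : IsHyperideal D) :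
    ∀ l : List R, l ≠ [] → (∀ x ∈ l, x ∈ D) → hsumList l ⊆ D := by
  intro l
  induction l with
  | nil => intro h; exact absurd rfl h
  | cons v vs ih =>
    intro _ hmem
    cases vs with
    | nil =>
      intro u hu
      obtain ⟨a, ha, b, hb, hu2⟩ := myMem_haddSet.1 hu
      have hav : a = v := ha
      have hb0 : b = zero := hb
      subst hb0
      rw [hadd_zero] at hu2
      have hua : u = a := hu2
      rw [hua, hav]
      exact hmem v List.mem_cons_self
    | cons y ys =>
      intro u hu
      obtain ⟨a, ha, b, hb, hu2⟩ := myMem_haddSet.1 hu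
      have haD : a ∈ D := by
        have hav : a = v := ha
        rw [hav]; exact hmem v List.mem_cons_self
      have hb' : b ∈ D := ih (by simp) (fun w hw => hmem w (List.mem_cons_of_mem _ hw)) hb
      exact hD.2.1 a haD b hb' hu2

end Semihyperring

open Semihyperring in
/-- in a fully idempotent semihyperring, the distributive law
`min (λ, δ) ⊕ η = min (λ ⊕ η, δ ⊕ η)` holds for all fuzzy hyperideals `λ, δ, η`. -/
theorem fsum_inf_distrib {R : Type*} [Semihyperring R] (h : FullyIdempotent R)
    (lam delta eta : R → unitInterval) (hlam : IsFuzzyHyperideal lam)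
    (hdelta : IsFuzzyHyperideal delta) (heta : IsFuzzyHyperideal eta) :
    fsum (lam ⊓ delta) eta = fsum lam eta ⊓ fsum delta eta := by
  funext x
  apply le_antisymm
  · -- easy direction
    apply sSup_le
    rintro t ⟨y, z, hx, rfl⟩
    refine le_inf ?_ ?_
    · exact le_trans (inf_le_inf (by exact inf_le_left) le_rfl)
        (le_sSup ⟨y, z, hx, rfl⟩)
    · exact le_trans (inf_le_inf (by exact inf_le_right) le_rfl)
        (le_sSup ⟨y, z, hx, rfl⟩)
  · -- hard direction
    show fsum lam eta x ⊓ fsum delta eta x ≤ _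
    by_contra hcon
    rw [not_le] at hcon
    set c := fsum (lam ⊓ delta) eta x with hc
    have h1 : c < fsum lam eta x := lt_of_lt_of_le hcon inf_le_left
    have h2 : c < fsum delta eta x := lt_of_lt_of_le hcon inf_le_right
    -- extract witnesses above c
    obtain ⟨t1, ⟨y, z, hyz, rfl⟩, ht1⟩ : ∃ t ∈ {t | ∃ y z : R, x ∈ hadd y z ∧ t = lam y ⊓ eta z}, c < t := by
      by_contra hno
      push_neg at hno
      exact absurd (sSup_le hno) (not_le.2 h1)
    obtain ⟨t2, ⟨y', z', hyz', rfl⟩, ht2⟩ : ∃ t ∈ {t | ∃ y z : R, x ∈ hadd y z ∧ t = delta y ⊓ eta z}, c < t := by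
      by_contra hno
      push_neg at hno
      exact absurd (sSup_le hno) (not_le.2 h2)
    set t : unitInterval := lam y ⊓ eta z ⊓ (delta y' ⊓ eta z') with htdef
    have hct : c < t := lt_inf_iff.2 ⟨ht1, ht2⟩
    -- level sets
    have hAy : t ≤ lam y := le_trans inf_le_left inf_le_left
    have hCz : t ≤ eta z := le_trans inf_le_left inf_le_right
    have hBy' : t ≤ delta y' := le_trans inf_le_right inf_le_left
    have hCz' : t ≤ eta z' := le_trans inf_le_right inf_le_right
    have hA : IsHyperideal {u : R | t ≤ lam u} := myLevel_hyperideal hlam t y hAy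
    have hB : IsHyperideal {u : R | t ≤ delta u} := myLevel_hyperideal hdelta t y' hBy'
    have hC : IsHyperideal {u : R | t ≤ eta u} := myLevel_hyperideal heta t z hCz
    have hE0 : t ≤ (lam ⊓ delta) (zero : R) := by
      simp only [Pi.inf_apply]
      exact le_inf (le_trans hAy (myLe_zero hlam y)) (le_trans hBy' (myLe_zero hdelta y'))
    have hE : IsHyperideal {u : R | t ≤ (lam ⊓ delta) u} :=
      myLevel_hyperideal (myInf_fuzzy hlam hdelta) t zero hE0
    set K := csum {u : R | t ≤ lam u} {u : R | t ≤ eta u} with hKdef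
    set L := csum {u : R | t ≤ delta u} {u : R | t ≤ eta u} with hLdef
    set D := csum {u : R | t ≤ (lam ⊓ delta) u} {u : R | t ≤ eta u} with hDdef
    have hK : IsHyperideal K := myCsum_hyperideal hA hC
    have hL : IsHyperideal L := myCsum_hyperideal hB hC
    have hD : IsHyperideal D := myCsum_hyperideal hE hC
    have hxK : x ∈ K := ⟨y, hAy, z, hCz, hyz⟩
    have hxL : x ∈ L := ⟨y', hBy', z', hCz', hyz'⟩
    have hI : IsHyperideal (K ∩ L) := myInter_hyperideal hK hL ⟨x, hxK, hxL⟩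
    have hxI : x ∈ setProd (K ∩ L) (K ∩ L) := by rw [h _ hI]; exact ⟨hxK, hxL⟩
    -- products land in D
    have hprod : ∀ p q : R, p ∈ K → q ∈ L → mul p q ∈ D := by
      rintro p q ⟨a, ha, cc, hcc, hp⟩ ⟨b, hb, c', hc', hq⟩
      have hpq : mul p q ∈ hadd (mul p b) (mul p c') := by
        rw [← Semihyperring.left_distrib]; exact ⟨q, hq, rfl⟩
      have hpb : mul p b ∈ D := by
        have : mul p b ∈ hadd (mul a b) (mul cc b) := by
          rw [← Semihyperring.right_distrib]; exact ⟨p, hp, rfl⟩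
        have hab : mul a b ∈ {u : R | t ≤ (lam ⊓ delta) u} := by
          simp only [Set.mem_setOf_eq, Pi.inf_apply]
          exact le_inf (le_trans ha (le_trans le_sup_left (hlam.2 a b)))
            (le_trans hb (le_trans le_sup_right (hdelta.2 a b)))
        have hcb : mul cc b ∈ {u : R | t ≤ eta u} :=
          le_trans hcc (le_trans le_sup_left (heta.2 cc b))
        exact ⟨mul a b, hab, mul cc b, hcb, this⟩
      have hpc' : mul p c' ∈ D := by
        have : mul p c' ∈ {u : R | t ≤ eta u} :=
          le_trans hc' (le_trans le_sup_right (heta.2 p c'))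
        exact myMem_csum_right (A := {u : R | t ≤ (lam ⊓ delta) u}) (C := {u : R | t ≤ eta u}) hE0 this
      exact hD.2.1 _ hpb _ hpc' hpq
    -- x ∈ D
    obtain ⟨l, hlne, hlmem, hxsum⟩ := hxI
    have hxD : x ∈ D := by
      refine myHsumList_subset hD _ (by simpa using hlne) ?_ hxsum
      intro w hw
      simp only [List.mem_map] at hw
      obtain ⟨p, hpl, rfl⟩ := hw
      obtain ⟨hp1, hp2⟩ := hlmem p hpl
      exact hprod p.1 p.2 hp1.1 hp2.2
    obtain ⟨u, hu, v, hv, hxuv⟩ := hxD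
    have : t ≤ c := le_trans (le_inf hu hv) (le_sSup ⟨u, v, hxuv, rfl⟩)
    exact absurd this (not_le.2 hct)
end

section
/- Let (R, ⊕, ·) be a semihyperring. Then R is fully idempotent if and only if the fuzzy hyperideals of R, ordered pointwise, form a distributive lattice under the sum ⊕ and pointwise minimum, in which moreover min(λ, μ) = λμ for each pair of fuzzy hyperideals λ, μ of R; that is, R is fully idempotent if and only if both (i) min(λ, δ) ⊕ η = min(λ ⊕ η, δ ⊕ η) for all fuzzy hyperideals λ, δ, η of R and (ii) min(λ, μ) = λμ for all fuzzy hyperideals λ, μ of R. -/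
namespace SHProof
open Semihyperring

variable {R : Type*} [Semihyperring R]

lemma mem_haddSet {A B : Set R} {x : R} :
    x ∈ haddSet A B ↔ ∃ a ∈ A, ∃ b ∈ B, x ∈ hadd a b := by
  simp [haddSet]

lemma haddSet_zero_left (S : Set R) : haddSet {zero} S = S := by
  ext x
  simp [mem_haddSet, Semihyperring.zero_hadd]

lemma haddSet_assoc (A B C : Set R) :
    haddSet A (haddSet B C) = haddSet (haddSet A B) C := by
  ext x
  simp only [mem_haddSet]
  constructor
  · rintro ⟨a, ha, w, ⟨b, hb, c, hc, hw⟩, hx⟩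
    have h := Semihyperring.hadd_assoc a b c
    have hx' : x ∈ ⋃ w ∈ hadd b c, hadd a w := by
      simp only [Set.mem_iUnion]; exact ⟨w, hw, hx⟩
    rw [h] at hx'
    simp only [Set.mem_iUnion] at hx'
    obtain ⟨v, hv, hxv⟩ := hx'
    exact ⟨v, ⟨a, ha, b, hb, hv⟩, c, hc, hxv⟩
  · rintro ⟨w, ⟨a, ha, b, hb, hw⟩, c, hc, hx⟩
    have h := Semihyperring.hadd_assoc a b c
    have hx' : x ∈ ⋃ w ∈ hadd a b, hadd w c := by
      simp only [Set.mem_iUnion]; exact ⟨w, hw, hx⟩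
    rw [← h] at hx'
    simp only [Set.mem_iUnion] at hx'
    obtain ⟨v, hv, hxv⟩ := hx'
    exact ⟨a, ha, v, ⟨b, hb, c, hc, hv⟩, hxv⟩

lemma hsumList_cons (a : R) (l : List R) :
    hsumList (a :: l) = haddSet {a} (hsumList l) := rfl

lemma hsumList_append (l₁ l₂ : List R) :
    hsumList (l₁ ++ l₂) = haddSet (hsumList l₁) (hsumList l₂) := by
  induction l₁ with
  | nil =>
      show hsumList l₂ = haddSet (hsumList []) (hsumList l₂)
      rw [show hsumList ([] : List R) = {zero} from rfl, haddSet_zero_left]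
  | cons a l ih =>
      rw [List.cons_append, hsumList_cons, hsumList_cons, ih, haddSet_assoc]

lemma hsumList_singleton (a : R) : hsumList [a] = {a} := by
  ext x
  rw [hsumList_cons]
  simp [mem_haddSet, show hsumList ([] : List R) = {zero} from rfl,
    Semihyperring.hadd_zero]

lemma hsumList_nonempty (l : List R) : (hsumList l).Nonempty := by
  induction l with
  | nil => exact ⟨zero, rfl⟩
  | cons a l ih =>
      obtain ⟨b, hb⟩ := ih
      obtain ⟨x, hx⟩ := Semihyperring.hadd_nonempty a b
      exact ⟨x, (hsumList_cons a l) ▸ mem_haddSet.2 ⟨a, rfl, b, hb, hx⟩⟩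

lemma hadd_subset_hsum {l₁ l₂ : List R} {a b : R}
    (ha : a ∈ hsumList l₁) (hb : b ∈ hsumList l₂) :
    hadd a b ⊆ hsumList (l₁ ++ l₂) := by
  rw [hsumList_append]
  intro x hx
  exact mem_haddSet.2 ⟨a, ha, b, hb, hx⟩

lemma image_haddSet_left (r a : R) (S : Set R) :
    (fun w => mul r w) '' haddSet {a} S = haddSet {mul r a} ((fun w => mul r w) '' S) := by
  ext x
  simp only [Set.mem_image, mem_haddSet]
  constructor
  · rintro ⟨y, ⟨a', ha', b, hb, hy⟩, rfl⟩
    have haa : a' = a := ha'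
    subst haa
    have h2 : mul r y ∈ hadd (mul r a') (mul r b) := by
      rw [← Semihyperring.left_distrib]; exact ⟨y, hy, rfl⟩
    exact ⟨mul r a', rfl, mul r b, ⟨b, hb, rfl⟩, h2⟩
  · rintro ⟨c, hc, d, ⟨b, hb, rfl⟩, hx⟩
    have hcc : c = mul r a := hc
    subst hcc
    have h2 : x ∈ (fun w => mul r w) '' hadd a b := by
      rw [Semihyperring.left_distrib]; exact hx
    obtain ⟨y, hy, rfl⟩ := h2
    exact ⟨y, ⟨a, rfl, b, hb, hy⟩, rfl⟩

lemma image_haddSet_right (r a : R) (S : Set R) :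
    (fun w => mul w r) '' haddSet {a} S = haddSet {mul a r} ((fun w => mul w r) '' S) := by
  ext x
  simp only [Set.mem_image, mem_haddSet]
  constructor
  · rintro ⟨y, ⟨a', ha', b, hb, hy⟩, rfl⟩
    have haa : a' = a := ha'
    subst haa
    have h2 : mul y r ∈ hadd (mul a' r) (mul b r) := by
      rw [← Semihyperring.right_distrib]; exact ⟨y, hy, rfl⟩
    exact ⟨mul a' r, rfl, mul b r, ⟨b, hb, rfl⟩, h2⟩
  · rintro ⟨c, hc, d, ⟨b, hb, rfl⟩, hx⟩
    have hcc : c = mul a r := hc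
    subst hcc
    have h2 : x ∈ (fun w => mul w r) '' hadd a b := by
      rw [Semihyperring.right_distrib]; exact hx
    obtain ⟨y, hy, rfl⟩ := h2
    exact ⟨y, ⟨a, rfl, b, hb, hy⟩, rfl⟩

lemma image_mul_left_hsum (r : R) (l : List R) :
    (fun w => mul r w) '' hsumList l = hsumList (l.map (fun w => mul r w)) := by
  induction l with
  | nil =>
      show (fun w => mul r w) '' hsumList ([] : List R) = hsumList ([] : List R)
      rw [show hsumList ([] : List R) = {zero} from rfl]
      simp [Semihyperring.mul_zero]
  | cons a l ih =>
      rw [List.map_cons, hsumList_cons, hsumList_cons, image_haddSet_left, ih]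

lemma image_mul_right_hsum (r : R) (l : List R) :
    (fun w => mul w r) '' hsumList l = hsumList (l.map (fun w => mul w r)) := by
  induction l with
  | nil =>
      show (fun w => mul w r) '' hsumList ([] : List R) = hsumList ([] : List R)
      rw [show hsumList ([] : List R) = {zero} from rfl]
      simp [Semihyperring.zero_mul]
  | cons a l ih =>
      rw [List.map_cons, hsumList_cons, hsumList_cons, image_haddSet_right, ih]

lemma biInf_cons {α : Type*} (f : R → α) [CompleteLattice α] (a : R) (l : List R) :
    (⨅ p ∈ (a :: l), f p) = f a ⊓ ⨅ p ∈ l, f p := by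
  apply le_antisymm
  · exact le_inf (biInf_le f List.mem_cons_self)
      (le_iInf fun p => le_iInf fun hp => biInf_le f (List.mem_cons_of_mem a hp))
  · refine le_iInf fun p => le_iInf fun hp => ?_
    rcases List.mem_cons.1 hp with rfl | hp
    · exact inf_le_left
    · exact inf_le_right.trans (biInf_le f hp)

/-- Key lemma: a function with the fuzzy-⊕ property takes value ≥ the inf over
a nonempty list on any member of its hypersum. -/
lemma le_of_mem_hsum {μ : R → unitInterval}
    (hμ : ∀ x y : R, μ x ⊓ μ y ≤ ⨅ z ∈ hadd x y, μ z)
    : ∀ (l : List R), l ≠ [] → ∀ x ∈ hsumList l, (⨅ a ∈ l, μ a) ≤ μ x := by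
  intro l
  induction l with
  | nil => intro h; exact absurd rfl h
  | cons a l ih =>
      intro _ x hx
      rcases eq_or_ne l [] with rfl | hl
      · rw [hsumList_singleton] at hx
        have hx' : x = a := hx
        subst hx'
        exact biInf_le μ List.mem_cons_self
      · rw [hsumList_cons] at hx
        obtain ⟨a', ha', b, hb, hxab⟩ := mem_haddSet.1 hx
        clear hx
        have ha'' : a' = a := ha'
        subst ha''
        have h1 : μ a' ⊓ μ b ≤ μ x := (hμ a' b).trans (biInf_le μ hxab)
        have h2 := ih hl b hb
        rw [biInf_cons]
        exact (inf_le_inf_left _ h2).trans h1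

lemma mem_hsum_subset {I : Set R} (hI : ∀ x ∈ I, ∀ y ∈ I, hadd x y ⊆ I)
    : ∀ (l : List R), l ≠ [] → (∀ a ∈ l, a ∈ I) → hsumList l ⊆ I := by
  intro l
  induction l with
  | nil => intro h; exact absurd rfl h
  | cons a l ih =>
      intro _ hmem x hx
      rcases eq_or_ne l [] with rfl | hl
      · rw [hsumList_singleton] at hx
        have hx' : x = a := hx
        subst hx'
        exact hmem x List.mem_cons_self
      · rw [hsumList_cons] at hx
        obtain ⟨a', ha', b, hb, hxab⟩ := mem_haddSet.1 hx
        clear hx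
        have ha'' : a' = a := ha'
        subst ha''
        have hbI : b ∈ I := ih hl (fun c hc => hmem c (List.mem_cons_of_mem _ hc)) hb
        exact hI a' (hmem a' List.mem_cons_self) b hbI hxab

lemma haddSet_comm (A B : Set R) : haddSet A B = haddSet B A := by
  ext x
  simp only [mem_haddSet]
  constructor <;> rintro ⟨a, ha, b, hb, hx⟩ <;>
    exact ⟨b, hb, a, ha, (Semihyperring.hadd_comm a b) ▸ hx⟩

lemma hadd_eq_haddSet (y z : R) : hadd y z = haddSet {y} {z} := by
  ext x; simp [mem_haddSet]

lemma swap_middle (y z p q : R) :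
    haddSet (hadd y z) (hadd p q) = haddSet (hadd y p) (hadd z q) := by
  rw [hadd_eq_haddSet y z, hadd_eq_haddSet p q, hadd_eq_haddSet y p, hadd_eq_haddSet z q]
  calc haddSet (haddSet {y} {z}) (haddSet {p} {q})
      = haddSet {y} (haddSet {z} (haddSet {p} {q})) := (haddSet_assoc _ _ _).symm
    _ = haddSet {y} (haddSet (haddSet {z} {p}) ({q} : Set R)) := by
        rw [haddSet_assoc ({z} : Set R) ({p} : Set R) ({q} : Set R)]
    _ = haddSet {y} (haddSet (haddSet {p} {z}) ({q} : Set R)) := by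
        rw [haddSet_comm ({z} : Set R) ({p} : Set R)]
    _ = haddSet {y} (haddSet {p} (haddSet {z} {q})) := by
        rw [haddSet_assoc ({p} : Set R) ({z} : Set R) ({q} : Set R)]
    _ = haddSet (haddSet {y} {p}) (haddSet {z} {q}) := haddSet_assoc _ _ _

/-- In a complete linear order, a value strictly below a sup is exceeded by a member. -/
lemma lt_sSup' {S : Set unitInterval} {c : unitInterval} (h : c < sSup S) :
    ∃ t ∈ S, c < t := by
  by_contra h'
  push_neg at h'
  exact absurd (sSup_le h') (not_le.2 h)

lemma mu_zero_top {μ : R → unitInterval}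
    (h2 : ∀ x y : R, μ x ⊔ μ y ≤ μ (mul x y)) (x : R) : μ x ≤ μ zero :=
  (le_sup_left.trans (h2 x zero)).trans_eq (congrArg μ (Semihyperring.mul_zero x))

/-- Generic upper bound on `fprod`. -/
lemma fprod_le_aux {f g h : R → unitInterval}
    (hh1 : ∀ x y : R, h x ⊓ h y ≤ ⨅ z ∈ hadd x y, h z)
    (hfg : ∀ a b : R, f a ⊓ g b ≤ h (mul a b)) : fprod f g ≤ h := by
  intro x
  refine sSup_le ?_
  rintro t ⟨l, hne, hx, rfl⟩
  have key : (⨅ a ∈ (l.map fun p => mul p.1 p.2), h a) ≤ h x :=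
    le_of_mem_hsum hh1 _ (by simpa using hne) x hx
  refine le_trans ?_ key
  refine le_iInf fun a => le_iInf fun ha => ?_
  obtain ⟨p, hp, rfl⟩ := List.mem_map.1 ha
  exact (iInf₂_le p hp).trans (hfg p.1 p.2)

lemma fprod_le_inf {lam mu : R → unitInterval} (hl : IsFuzzyHyperideal lam)
    (hm : IsFuzzyHyperideal mu) : fprod lam mu ≤ lam ⊓ mu := by
  refine le_inf (fprod_le_aux hl.1 fun a b => ?_) (fprod_le_aux hm.1 fun a b => ?_)
  · exact inf_le_left.trans (le_sup_left.trans (hl.2 a b))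
  · exact inf_le_right.trans (le_sup_right.trans (hm.2 a b))

lemma inf_fhi {lam delta : R → unitInterval} (hl : IsFuzzyHyperideal lam)
    (hd : IsFuzzyHyperideal delta) : IsFuzzyHyperideal (lam ⊓ delta) := by
  constructor
  · intro x y
    simp only [Pi.inf_apply]
    refine le_iInf fun z => le_iInf fun hz => le_inf ?_ ?_
    · have h1 : lam x ⊓ lam y ≤ lam z := (hl.1 x y).trans (biInf_le _ hz)
      exact le_trans (inf_le_inf inf_le_left inf_le_left) h1
    · have h1 : delta x ⊓ delta y ≤ delta z := (hd.1 x y).trans (biInf_le _ hz)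
      exact le_trans (inf_le_inf inf_le_right inf_le_right) h1
  · intro x y
    simp only [Pi.inf_apply]
    refine sup_le (le_inf ?_ ?_) (le_inf ?_ ?_)
    · exact inf_le_left.trans (le_sup_left.trans (hl.2 x y))
    · exact inf_le_right.trans (le_sup_left.trans (hd.2 x y))
    · exact inf_le_left.trans (le_sup_right.trans (hl.2 x y))
    · exact inf_le_right.trans (le_sup_right.trans (hd.2 x y))

lemma fsum_fhi {lam eta : R → unitInterval} (hl : IsFuzzyHyperideal lam)
    (he : IsFuzzyHyperideal eta) : IsFuzzyHyperideal (fsum lam eta) := by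
  constructor
  · intro a b
    refine le_iInf fun w => le_iInf fun hw => le_of_forall_lt fun c hc => ?_
    obtain ⟨t, ⟨y, z, hyz, rfl⟩, hct⟩ := lt_sSup' (hc.trans_le inf_le_left)
    obtain ⟨s, ⟨p, q, hpq, rfl⟩, hcs⟩ := lt_sSup' (hc.trans_le inf_le_right)
    have hw2 : w ∈ haddSet (hadd y z) (hadd p q) := mem_haddSet.2 ⟨a, hyz, b, hpq, hw⟩
    rw [swap_middle] at hw2
    obtain ⟨c', hc', d', hd', hw3⟩ := mem_haddSet.1 hw2
    have h1 : lam y ⊓ lam p ≤ lam c' := (hl.1 y p).trans (biInf_le _ hc')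
    have h2 : eta z ⊓ eta q ≤ eta d' := (he.1 z q).trans (biInf_le _ hd')
    have h3 : lam c' ⊓ eta d' ≤ fsum lam eta w := le_sSup ⟨c', d', hw3, rfl⟩
    have hc1 : c < lam c' := lt_of_lt_of_le (lt_inf_iff.2 ⟨hct.trans_le inf_le_left,
      hcs.trans_le inf_le_left⟩) h1
    have hc2 : c < eta d' := lt_of_lt_of_le (lt_inf_iff.2 ⟨hct.trans_le inf_le_right,
      hcs.trans_le inf_le_right⟩) h2
    exact lt_of_lt_of_le (lt_inf_iff.2 ⟨hc1, hc2⟩) h3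
  · intro a b
    refine sup_le (sSup_le ?_) (sSup_le ?_)
    · rintro t ⟨y, z, hyz, rfl⟩
      have hmem : mul a b ∈ hadd (mul y b) (mul z b) := by
        rw [← Semihyperring.right_distrib]; exact ⟨a, hyz, rfl⟩
      refine le_trans (inf_le_inf (le_sup_left.trans (hl.2 y b))
        (le_sup_left.trans (he.2 z b))) (le_sSup ⟨mul y b, mul z b, hmem, rfl⟩)
    · rintro t ⟨p, q, hpq, rfl⟩
      have hmem : mul a b ∈ hadd (mul a p) (mul a q) := by
        rw [← Semihyperring.left_distrib]; exact ⟨b, hpq, rfl⟩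
      refine le_trans (inf_le_inf (le_sup_right.trans (hl.2 a p))
        (le_sup_right.trans (he.2 a q))) (le_sSup ⟨mul a p, mul a q, hmem, rfl⟩)

lemma fsum_mono_left {f g eta : R → unitInterval} (h : f ≤ g) :
    fsum f eta ≤ fsum g eta := by
  intro x
  apply sSup_le
  rintro t ⟨y, z, hyz, rfl⟩
  exact le_trans (inf_le_inf_right _ (h y)) (le_sSup ⟨y, z, hyz, rfl⟩)

/-- Terms generating the hyperideal generated by `x`. -/
def GenTerm (x t : R) : Prop :=
  t = x ∨ (∃ r, t = mul r x) ∨ (∃ s, t = mul x s) ∨ (∃ r s, t = mul (mul r x) s)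

lemma genTerm_mul_left (r : R) {x t : R} (h : GenTerm x t) : GenTerm x (mul r t) := by
  rcases h with rfl | ⟨r', rfl⟩ | ⟨s, rfl⟩ | ⟨r', s, rfl⟩
  · exact Or.inr (Or.inl ⟨r, rfl⟩)
  · exact Or.inr (Or.inl ⟨mul r r', by rw [Semihyperring.mul_assoc]⟩)
  · exact Or.inr (Or.inr (Or.inr ⟨r, s, (Semihyperring.mul_assoc r x s).symm⟩))
  · exact Or.inr (Or.inr (Or.inr ⟨mul r r', s, by
      simp only [Semihyperring.mul_assoc]⟩))

lemma genTerm_mul_right (r : R) {x t : R} (h : GenTerm x t) : GenTerm x (mul t r) := by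
  rcases h with rfl | ⟨r', rfl⟩ | ⟨s, rfl⟩ | ⟨r', s, rfl⟩
  · exact Or.inr (Or.inr (Or.inl ⟨r, rfl⟩))
  · exact Or.inr (Or.inr (Or.inr ⟨r', r, rfl⟩))
  · exact Or.inr (Or.inr (Or.inl ⟨mul s r, by rw [Semihyperring.mul_assoc]⟩))
  · exact Or.inr (Or.inr (Or.inr ⟨r', mul s r, by
      simp only [Semihyperring.mul_assoc]⟩))

/-- The hyperideal generated by `x`. -/
def genI (x : R) : Set R :=
  {w | ∃ l : List R, l ≠ [] ∧ (∀ t ∈ l, GenTerm x t) ∧ w ∈ hsumList l}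

lemma mem_genI_self (x : R) : x ∈ genI x := by
  refine ⟨[x], by simp, ?_, ?_⟩
  · intro t ht
    have : t = x := by simpa using ht
    exact Or.inl this
  · rw [hsumList_singleton]; exact rfl

lemma genI_hyperideal (x : R) : IsHyperideal (genI x) := by
  refine ⟨⟨x, mem_genI_self x⟩, ?_, ?_⟩
  · rintro a ⟨l₁, h1, t1, ha⟩ b ⟨l₂, h2, t2, hb⟩ w hw
    refine ⟨l₁ ++ l₂, by simp [h1], ?_, hadd_subset_hsum ha hb hw⟩
    intro t ht
    rcases List.mem_append.1 ht with h | h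
    exacts [t1 t h, t2 t h]
  · rintro r a ⟨l, hne, ht, ha⟩
    constructor
    · refine ⟨l.map (fun w => mul r w), by simpa using hne, ?_, ?_⟩
      · intro t htm
        obtain ⟨u, hu, rfl⟩ := List.mem_map.1 htm
        exact genTerm_mul_left r (ht u hu)
      · rw [← image_mul_left_hsum]; exact ⟨a, ha, rfl⟩
    · refine ⟨l.map (fun w => mul w r), by simpa using hne, ?_, ?_⟩
      · intro t htm
        obtain ⟨u, hu, rfl⟩ := List.mem_map.1 htm
        exact genTerm_mul_right r (ht u hu)
      · rw [← image_mul_right_hsum]; exact ⟨a, ha, rfl⟩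

lemma genI_le {μ : R → unitInterval} (hμ : IsFuzzyHyperideal μ) {x : R} :
    ∀ w ∈ genI x, μ x ≤ μ w := by
  rintro w ⟨l, hne, ht, hw⟩
  refine le_trans (le_iInf fun t => le_iInf fun htl => ?_) (le_of_mem_hsum hμ.1 l hne w hw)
  rcases ht t htl with rfl | ⟨r, rfl⟩ | ⟨s, rfl⟩ | ⟨r, s, rfl⟩
  · exact le_refl _
  · exact le_sup_right.trans (hμ.2 r x)
  · exact le_sup_left.trans (hμ.2 x s)
  · exact (le_sup_right.trans (hμ.2 r x)).trans (le_sup_left.trans (hμ.2 (mul r x) s))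

lemma inf_le_fprod (hFI : FullyIdempotent R) {lam mu : R → unitInterval}
    (hl : IsFuzzyHyperideal lam) (hm : IsFuzzyHyperideal mu) :
    lam ⊓ mu ≤ fprod lam mu := by
  intro x
  have hx : x ∈ setProd (genI x) (genI x) := by
    rw [hFI _ (genI_hyperideal x)]; exact mem_genI_self x
  obtain ⟨l, hne, hmem, hxs⟩ := hx
  refine le_trans ?_ (le_sSup ⟨l, hne, hxs, rfl⟩)
  simp only [Pi.inf_apply]
  exact le_iInf fun p => le_iInf fun hp =>
    inf_le_inf (genI_le hl p.1 (hmem p hp).1) (genI_le hm p.2 (hmem p hp).2)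

/-- Characteristic function of a subset. -/
noncomputable def chi (I : Set R) : R → unitInterval :=
  fun w => haveI := Classical.propDecidable (w ∈ I)
  if w ∈ I then 1 else 0


lemma chi_fhi {I : Set R} (hI : IsHyperideal I) : IsFuzzyHyperideal (chi I) := by
  constructor
  · intro x y
    refine le_iInf fun z => le_iInf fun hz => ?_
    by_cases hx : x ∈ I
    · by_cases hy : y ∈ I
      · have hzI : z ∈ I := hI.2.1 x hx y hy hz
        have h1 : chi I z = 1 := by simp [chi, hzI]
        rw [h1]; exact unitInterval.le_one'
      · have h0 : chi I y = 0 := by simp [chi, hy]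
        exact le_trans (inf_le_right.trans_eq h0) unitInterval.nonneg'
    · have h0 : chi I x = 0 := by simp [chi, hx]
      exact le_trans (inf_le_left.trans_eq h0) unitInterval.nonneg'
  · intro x y
    refine sup_le ?_ ?_
    · by_cases hx : x ∈ I
      · have h1 : chi I (mul x y) = 1 := by simp [chi, (hI.2.2 y x hx).2]
        rw [h1]; exact unitInterval.le_one'
      · have h0 : chi I x = 0 := by simp [chi, hx]
        exact h0.le.trans unitInterval.nonneg'
    · by_cases hy : y ∈ I
      · have h1 : chi I (mul x y) = 1 := by simp [chi, (hI.2.2 x y hy).1]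
        rw [h1]; exact unitInterval.le_one'
      · have h0 : chi I y = 0 := by simp [chi, hy]
        exact h0.le.trans unitInterval.nonneg'

lemma setProd_self_subset {I : Set R} (hI : IsHyperideal I) : setProd I I ⊆ I := by
  rintro x ⟨l, hne, hmem, hx⟩
  refine mem_hsum_subset hI.2.1 _ (by simpa using hne) ?_ hx
  intro a ha
  obtain ⟨p, hp, rfl⟩ := List.mem_map.1 ha
  exact (hI.2.2 p.2 p.1 (hmem p hp).1).2

lemma zero_lt_one_ui : (0 : unitInterval) < 1 := by
  rw [← Subtype.coe_lt_coe]
  norm_num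

end SHProof

open Semihyperring in
/-- `R` is fully idempotent iff the fuzzy hyperideals of `R` form a
distributive lattice under sum and pointwise minimum in which `min (λ, μ) = λμ`, i.e. iff
(i) `min (λ, δ) ⊕ η = min (λ ⊕ η, δ ⊕ η)` for all fuzzy hyperideals `λ, δ, η`, and
(ii) `min (λ, μ) = λμ` for all fuzzy hyperideals `λ, μ`. -/
theorem fullyIdempotent_iff_distributive_lattice (R : Type*) [Semihyperring R] :
    FullyIdempotent R ↔
      ((∀ lam delta eta : R → unitInterval, IsFuzzyHyperideal lam →
          IsFuzzyHyperideal delta → IsFuzzyHyperideal eta →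
          fsum (lam ⊓ delta) eta = fsum lam eta ⊓ fsum delta eta) ∧
        (∀ lam mu : R → unitInterval, IsFuzzyHyperideal lam → IsFuzzyHyperideal mu →
          lam ⊓ mu = fprod lam mu)) := by
  classical
  constructor
  · intro hFI
    have key2 : ∀ lam mu : R → unitInterval, IsFuzzyHyperideal lam → IsFuzzyHyperideal mu →
        lam ⊓ mu = fprod lam mu := fun lam mu hl hm =>
      le_antisymm (SHProof.inf_le_fprod hFI hl hm) (SHProof.fprod_le_inf hl hm)
    refine ⟨?_, key2⟩
    intro lam delta eta hl hd he
    apply le_antisymm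
    · exact le_inf (SHProof.fsum_mono_left inf_le_left)
        (SHProof.fsum_mono_left inf_le_right)
    · rw [key2 _ _ (SHProof.fsum_fhi hl he) (SHProof.fsum_fhi hd he)]
      have hsumfhi := SHProof.fsum_fhi (SHProof.inf_fhi hl hd) he
      refine SHProof.fprod_le_aux hsumfhi.1 ?_
      intro a b
      refine le_of_forall_lt fun c hc => ?_
      obtain ⟨t, ⟨u, v, huv, rfl⟩, hct⟩ := SHProof.lt_sSup' (hc.trans_le inf_le_left)
      obtain ⟨s, ⟨p, q, hpq, rfl⟩, hcs⟩ := SHProof.lt_sSup' (hc.trans_le inf_le_right)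
      set nu := fsum (lam ⊓ delta) eta with hnu
      have hclu : c < lam u := hct.trans_le inf_le_left
      have hcev : c < eta v := hct.trans_le inf_le_right
      have hcdp : c < delta p := hcs.trans_le inf_le_left
      have hceq : c < eta q := hcs.trans_le inf_le_right
      have h_zero_ld : c < (lam ⊓ delta) zero := by
        simp only [Pi.inf_apply]
        exact lt_inf_iff.2 ⟨hclu.trans_le (SHProof.mu_zero_top hl.2 u),
          hcdp.trans_le (SHProof.mu_zero_top hd.2 p)⟩
      have h_up : c < nu (mul u p) := by
        have hm : mul u p ∈ hadd (mul u p) zero := by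
          rw [Semihyperring.hadd_zero]; exact rfl
        refine lt_of_lt_of_le ?_ (le_sSup ⟨mul u p, zero, hm, rfl⟩)
        refine lt_inf_iff.2 ⟨?_, hcev.trans_le (SHProof.mu_zero_top he.2 v)⟩
        simp only [Pi.inf_apply]
        exact lt_inf_iff.2 ⟨hclu.trans_le (le_sup_left.trans (hl.2 u p)),
          hcdp.trans_le (le_sup_right.trans (hd.2 u p))⟩
      have h_uq : c < nu (mul u q) := by
        have hm : mul u q ∈ hadd zero (mul u q) := by
          rw [Semihyperring.zero_hadd]; exact rfl
        exact lt_of_lt_of_le (lt_inf_iff.2 ⟨h_zero_ld,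
          hceq.trans_le (le_sup_right.trans (he.2 u q))⟩)
          (le_sSup ⟨zero, mul u q, hm, rfl⟩)
      have h_vp : c < nu (mul v p) := by
        have hm : mul v p ∈ hadd zero (mul v p) := by
          rw [Semihyperring.zero_hadd]; exact rfl
        exact lt_of_lt_of_le (lt_inf_iff.2 ⟨h_zero_ld,
          hcev.trans_le (le_sup_left.trans (he.2 v p))⟩)
          (le_sSup ⟨zero, mul v p, hm, rfl⟩)
      have h_vq : c < nu (mul v q) := by
        have hm : mul v q ∈ hadd zero (mul v q) := by
          rw [Semihyperring.zero_hadd]; exact rfl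
        exact lt_of_lt_of_le (lt_inf_iff.2 ⟨h_zero_ld,
          hcev.trans_le (le_sup_left.trans (he.2 v q))⟩)
          (le_sSup ⟨zero, mul v q, hm, rfl⟩)
      have h_ub : c < nu (mul u b) := by
        have hm : mul u b ∈ hadd (mul u p) (mul u q) := by
          rw [← Semihyperring.left_distrib]; exact ⟨b, hpq, rfl⟩
        exact lt_of_lt_of_le (lt_inf_iff.2 ⟨h_up, h_uq⟩)
          ((hsumfhi.1 (mul u p) (mul u q)).trans (iInf₂_le (mul u b) hm))
      have h_vb : c < nu (mul v b) := by
        have hm : mul v b ∈ hadd (mul v p) (mul v q) := by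
          rw [← Semihyperring.left_distrib]; exact ⟨b, hpq, rfl⟩
        exact lt_of_lt_of_le (lt_inf_iff.2 ⟨h_vp, h_vq⟩)
          ((hsumfhi.1 (mul v p) (mul v q)).trans (iInf₂_le (mul v b) hm))
      have hm : mul a b ∈ hadd (mul u b) (mul v b) := by
        rw [← Semihyperring.right_distrib]; exact ⟨a, huv, rfl⟩
      exact lt_of_lt_of_le (lt_inf_iff.2 ⟨h_ub, h_vb⟩)
        ((hsumfhi.1 (mul u b) (mul v b)).trans (iInf₂_le (mul a b) hm))
  · rintro ⟨_, h2⟩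
    intro I hI
    apply Set.Subset.antisymm (SHProof.setProd_self_subset hI)
    intro x hxI
    have hchi := SHProof.chi_fhi hI
    have heq := congrFun (h2 _ _ hchi hchi) x
    have h1 : (SHProof.chi I ⊓ SHProof.chi I) x = 1 := by
      simp [Pi.inf_apply, SHProof.chi, hxI]
    have hpos : (0 : unitInterval) < fprod (SHProof.chi I) (SHProof.chi I) x := by
      rw [← heq, h1]; exact SHProof.zero_lt_one_ui
    obtain ⟨t, ⟨l, hne, hx, rfl⟩, hct⟩ := SHProof.lt_sSup' hpos
    refine ⟨l, hne, fun p hp => ?_, hx⟩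
    have hle : (⨅ q ∈ l, SHProof.chi I q.1 ⊓ SHProof.chi I q.2) ≤
        SHProof.chi I p.1 ⊓ SHProof.chi I p.2 := iInf₂_le p hp
    have h3 : (0 : unitInterval) < SHProof.chi I p.1 ⊓ SHProof.chi I p.2 :=
      hct.trans_le hle
    constructor
    · by_contra h
      have h0 : SHProof.chi I p.1 = 0 := by simp [SHProof.chi, h]
      exact absurd (h3.trans_le (inf_le_left.trans_eq h0)) (lt_irrefl _)
    · by_contra h
      have h0 : SHProof.chi I p.2 = 0 := by simp [SHProof.chi, h]
      exact absurd (h3.trans_le (inf_le_right.trans_eq h0)) (lt_irrefl _)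
end

section
/- Let (R, ⊕, ·) be a fully idempotent semihyperring and η a fuzzy hyperideal of R. If η is a fuzzy prime hyperideal, then η is a fuzzy irreducible hyperideal. -/
open Semihyperring in
lemma mem_hsumList_le {R : Type*} [Semihyperring R] {μ : R → unitInterval}
    (hμ : ∀ a b : R, μ a ⊓ μ b ≤ ⨅ z ∈ hadd a b, μ z) :
    ∀ (l : List R) (x : R), x ∈ hsumList l → (⨅ w ∈ l, μ w) ⊓ μ zero ≤ μ x := by
  intro l
  induction l with
  | nil =>
    intro x hx
    simp only [hsumList, Set.mem_singleton_iff] at hx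
    subst hx
    exact inf_le_right
  | cons a xs ih =>
    intro x hx
    simp only [hsumList, haddSet, Set.mem_iUnion, Set.mem_singleton_iff,
      exists_prop] at hx
    obtain ⟨a', rfl, b, hb, hx⟩ := hx
    have h1 : μ a' ⊓ μ b ≤ μ x := (hμ a' b).trans (biInf_le μ hx)
    have h2 : (⨅ w ∈ xs, μ w) ⊓ μ zero ≤ μ b := ih b hb
    refine le_trans (le_inf ?_ ?_) h1
    · exact inf_le_left.trans (biInf_le μ List.mem_cons_self)
    · refine le_trans (inf_le_inf_right _ ?_) h2
      exact le_iInf₂ fun w hw => biInf_le μ (List.mem_cons_of_mem a' hw)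

open Semihyperring in
/-- in a fully idempotent semihyperring, every fuzzy prime hyperideal is a
fuzzy irreducible hyperideal. -/
theorem fuzzyPrime_is_fuzzyIrreducible {R : Type*} [Semihyperring R]
    (h : FullyIdempotent R) (eta : R → unitInterval) (heta : IsFuzzyHyperideal eta)
    (hp : IsFuzzyPrimeHyperideal eta) :
    IsFuzzyIrreducibleHyperideal eta := by
  refine ⟨heta, ?_⟩
  intro lam mu hlam hmu hmin
  -- η ≤ λ and η ≤ μ
  have hle1 : eta ≤ lam := hmin ▸ inf_le_left
  have hle2 : eta ≤ mu := hmin ▸ inf_le_right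
  -- μ zero dominates μ y for any fuzzy hyperideal μ
  have hzero : ∀ (ν : R → unitInterval), IsFuzzyHyperideal ν → ∀ y, ν y ≤ ν zero := by
    intro ν hν y
    have := hν.2 y zero
    rw [Semihyperring.mul_zero] at this
    exact le_trans le_sup_left this
  have hprod : fprod lam mu ≤ eta := by
    rw [← hmin]
    intro x
    apply sSup_le
    rintro t ⟨l, hl, hx, rfl⟩
    obtain ⟨p0, hp0⟩ := List.exists_mem_of_ne_nil l hl
    have ht1 : ∀ (ν : R → unitInterval), IsFuzzyHyperideal ν →
        (∀ p : R × R, p ∈ l → lam p.1 ⊓ mu p.2 ≤ ν (mul p.1 p.2)) →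
        (⨅ p ∈ l, lam p.1 ⊓ mu p.2) ≤ ν x := by
      intro ν hν hbound
      refine le_trans ?_ (mem_hsumList_le hν.1 _ x hx)
      refine le_inf (le_iInf₂ ?_) ?_
      · intro w hw
        obtain ⟨p, hp, rfl⟩ := List.mem_map.mp hw
        exact le_trans (biInf_le _ hp) (hbound p hp)
      · refine le_trans (biInf_le _ hp0) ?_
        exact le_trans (hbound p0 hp0) (hzero ν hν _)
    refine le_inf ?_ ?_
    · refine ht1 lam hlam ?_
      intro p _
      exact le_trans inf_le_left (le_trans le_sup_left (hlam.2 p.1 p.2))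
    · refine ht1 mu hmu ?_
      intro p _
      exact le_trans inf_le_right (le_trans le_sup_right (hmu.2 p.1 p.2))
  rcases hp.2 lam mu hlam hmu hprod with h1 | h2
  · exact Or.inl (le_antisymm h1 hle1)
  · exact Or.inr (le_antisymm h2 hle2)
end

section
/- Let (R, ⊕, ·) be a fully idempotent semihyperring and η a fuzzy hyperideal of R. If η is a fuzzy irreducible hyperideal, then η is a fuzzy prime hyperideal. -/
-- ============ auxiliary development ============
namespace SHRAux
open Semihyperring

variable {R : Type*} [Semihyperring R]

/-- Elementwise associativity, direction 1. -/
lemma assoc1 {x y z w t : R} (hw : w ∈ hadd y z) (ht : t ∈ hadd x w) :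
    ∃ u ∈ hadd x y, t ∈ hadd u z := by
  have h := hadd_assoc x y z
  have : t ∈ ⋃ w ∈ hadd y z, hadd x w := Set.mem_biUnion hw ht
  rw [h] at this
  simpa using this

/-- Elementwise associativity, direction 2. -/
lemma assoc2 {x y z u t : R} (hu : u ∈ hadd x y) (ht : t ∈ hadd u z) :
    ∃ w ∈ hadd y z, t ∈ hadd x w := by
  have h := hadd_assoc x y z
  have : t ∈ ⋃ u ∈ hadd x y, hadd u z := Set.mem_biUnion hu ht
  rw [← h] at this
  simpa using this

lemma comm_mem {x y t : R} (ht : t ∈ hadd x y) : t ∈ hadd y x := by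
  rwa [hadd_comm]

/-- Medial rearrangement: z ∈ (a⊕b) ⊕ (c⊕d) implies z ∈ (a⊕c) ⊕ (b⊕d). -/
lemma medial {a b c d x y z : R} (hx : x ∈ hadd a b) (hy : y ∈ hadd c d)
    (hz : z ∈ hadd x y) : ∃ u ∈ hadd a c, ∃ v ∈ hadd b d, z ∈ hadd u v := by
  obtain ⟨w, hw, hz1⟩ := assoc2 hx hz          -- w ∈ b⊕y, z ∈ a⊕w
  obtain ⟨u, hu, hw2⟩ := assoc1 hy hw          -- u ∈ b⊕c, w ∈ u⊕d
  obtain ⟨v, hv, hz2⟩ := assoc1 hw2 hz1        -- v ∈ a⊕u, z ∈ v⊕d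
  obtain ⟨s, hs, hv2⟩ := assoc1 (comm_mem hu) hv -- s ∈ a⊕c, v ∈ s⊕b
  obtain ⟨w', hw', hz3⟩ := assoc2 hv2 hz2      -- w' ∈ b⊕d, z ∈ s⊕w'
  exact ⟨s, hs, w', hw', hz3⟩

/-- mul on the right distributes elementwise. -/
lemma mul_right_mem {a b y z : R} (hy : y ∈ hadd a b) :
    mul y z ∈ hadd (mul a z) (mul b z) := by
  rw [← Semihyperring.right_distrib]; exact ⟨y, hy, rfl⟩

lemma mul_left_mem {c d y z : R} (hz : z ∈ hadd c d) :
    mul y z ∈ hadd (mul y c) (mul y d) := by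
  rw [← Semihyperring.left_distrib]; exact ⟨z, hz, rfl⟩

section fuzzy
variable {ν lam mu eta : R → unitInterval}

lemma fh_add (hν : IsFuzzyHyperideal ν) {x y z : R} (hz : z ∈ hadd x y) :
    ν x ⊓ ν y ≤ ν z :=
  (hν.1 x y).trans (iInf₂_le z hz)

lemma fh_mull (hν : IsFuzzyHyperideal ν) (x y : R) : ν x ≤ ν (mul x y) :=
  le_sup_left.trans (hν.2 x y)

lemma fh_mulr (hν : IsFuzzyHyperideal ν) (x y : R) : ν y ≤ ν (mul x y) :=
  le_sup_right.trans (hν.2 x y)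

/-- Hypersum bound for fuzzy hyperideals. -/
lemma hsum_bound (hν : IsFuzzyHyperideal ν) :
    ∀ l : List R, l ≠ [] → ∀ x ∈ hsumList l, (⨅ a ∈ l, ν a) ≤ ν x := by
  intro l
  induction l with
  | nil => simp
  | cons a xs ih =>
    intro _ x hx
    have hx' : ∃ w ∈ hsumList xs, x ∈ hadd a w := by
      simpa [hsumList, haddSet] using hx
    obtain ⟨w, hw, hxw⟩ := hx'
    rcases List.eq_nil_or_concat' xs with rfl | hne
    · simp only [hsumList, Set.mem_singleton_iff] at hw
      subst hw
      rw [hadd_zero] at hxw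
      simp only [Set.mem_singleton_iff] at hxw
      exact (iInf₂_le a List.mem_cons_self).trans (le_of_eq (congrArg ν hxw.symm))
    · have hxs : xs ≠ [] := by rcases hne with ⟨l', b, rfl⟩; simp
      have h1 : (⨅ b ∈ xs, ν b) ≤ ν w := ih hxs w hw
      have h2 : ν a ⊓ ν w ≤ ν x := fh_add hν hxw
      refine le_trans ?_ h2
      refine le_inf (iInf₂_le a List.mem_cons_self) (le_trans ?_ h1)
      exact le_iInf₂ fun b hb => iInf₂_le b (List.mem_cons_of_mem _ hb)

lemma fprod_le_inf (hl : IsFuzzyHyperideal lam) (hm : IsFuzzyHyperideal mu) :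
    fprod lam mu ≤ lam ⊓ mu := by
  intro x
  refine sSup_le ?_
  rintro t ⟨l, hne, hx, rfl⟩
  have hmap : (l.map fun p => mul p.1 p.2) ≠ [] := by simpa using hne
  refine le_inf ?_ ?_
  · refine le_trans ?_ (hsum_bound hl _ hmap x hx)
    refine le_iInf₂ ?_
    rintro b hb
    simp only [List.mem_map] at hb
    obtain ⟨p, hp, rfl⟩ := hb
    exact (iInf₂_le p hp).trans (inf_le_left.trans (fh_mull hl _ _))
  · refine le_trans ?_ (hsum_bound hm _ hmap x hx)
    refine le_iInf₂ ?_
    rintro b hb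
    simp only [List.mem_map] at hb
    obtain ⟨p, hp, rfl⟩ := hb
    exact (iInf₂_le p hp).trans (inf_le_right.trans (fh_mulr hm _ _))

/-- key: full idempotency gives the reverse inequality. -/
lemma inf_le_fprod (h : FullyIdempotent R)
    (hl : IsFuzzyHyperideal lam) (hm : IsFuzzyHyperideal mu) :
    lam ⊓ mu ≤ fprod lam mu := by
  intro x
  set I : Set R := {z | ∀ ν : R → unitInterval, IsFuzzyHyperideal ν → ν x ≤ ν z} with hI
  have hxI : x ∈ I := fun ν _ => le_rfl
  have hideal : IsHyperideal I := by
    refine ⟨⟨x, hxI⟩, ?_, ?_⟩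
    · intro a ha b hb z hz ν hν
      exact le_trans (le_inf (ha ν hν) (hb ν hν)) (fh_add hν hz)
    · intro r a ha
      exact ⟨fun ν hν => (ha ν hν).trans (fh_mulr hν _ _),
             fun ν hν => (ha ν hν).trans (fh_mull hν _ _)⟩
  have hx2 : x ∈ setProd I I := by rw [h I hideal]; exact hxI
  obtain ⟨l, hne, hmem, hx3⟩ := hx2
  refine le_trans ?_ (le_sSup ⟨l, hne, hx3, rfl⟩)
  refine le_iInf₂ fun p hp => ?_
  obtain ⟨h1, h2⟩ := hmem p hp
  exact inf_le_inf (h1 lam hl) (h2 mu hm)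

end fuzzy
end SHRAux

namespace SHRAux
open Semihyperring

variable {R : Type*} [Semihyperring R]
variable {lam mu eta : R → unitInterval}

lemma inf3_le {a b c d : unitInterval} {T : Set unitInterval}
    (h1 : a ⊓ d ≤ c) (h2 : b ⊓ d ≤ c) (h3 : ∀ t ∈ T, t ⊓ d ≤ c) :
    (a ⊔ b ⊔ sSup T) ⊓ d ≤ c := by
  rw [inf_sup_right, inf_sup_right, sSup_inf_eq]
  exact sup_le (sup_le h1 h2) (iSup₂_le h3)

lemma le_inf3 {a b c d : unitInterval} {T : Set unitInterval}
    (h1 : d ⊓ a ≤ c) (h2 : d ⊓ b ≤ c) (h3 : ∀ t ∈ T, d ⊓ t ≤ c) :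
    d ⊓ (a ⊔ b ⊔ sSup T) ≤ c := by
  rw [inf_sup_left, inf_sup_left, inf_sSup_eq]
  exact sup_le (sup_le h1 h2) (iSup₂_le h3)

/-- The join-like fuzzy hyperideal `S λ η = λ ⊔ η ⊔ (λ ⊕ η)`. -/
noncomputable def S (lam eta : R → unitInterval) : R → unitInterval :=
  fun x => lam x ⊔ eta x ⊔ fsum lam eta x

lemma fsum_ge {x y z : R} (h : x ∈ hadd y z) :
    lam y ⊓ eta z ≤ fsum lam eta x := le_sSup ⟨y, z, h, rfl⟩

lemma lam_le_S : lam ≤ S lam eta := fun _ => le_sup_left.trans le_sup_left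
lemma eta_le_S : eta ≤ S lam eta := fun _ => le_sup_right.trans le_sup_left
lemma fsum_le_S (x : R) : fsum lam eta x ≤ S lam eta x := le_sup_right

lemma S_fuzzy (hl : IsFuzzyHyperideal lam) (he : IsFuzzyHyperideal eta) :
    IsFuzzyHyperideal (S lam eta) := by
  constructor
  · intro x y
    refine le_iInf₂ fun z hz => ?_
    show (lam x ⊔ eta x ⊔ sSup _) ⊓ S lam eta y ≤ S lam eta z
    apply inf3_le
    · show lam x ⊓ (lam y ⊔ eta y ⊔ sSup _) ≤ _
      apply le_inf3
      · exact (fh_add hl hz).trans (le_sup_left.trans le_sup_left)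
      · exact (fsum_ge hz).trans (fsum_le_S z)
      · rintro t ⟨c, d, hy, rfl⟩
        obtain ⟨u, hu, hz2⟩ := assoc1 hy hz
        have h1 : lam x ⊓ lam c ≤ lam u := fh_add hl hu
        calc lam x ⊓ (lam c ⊓ eta d) = (lam x ⊓ lam c) ⊓ eta d := by rw [inf_assoc]
          _ ≤ lam u ⊓ eta d := inf_le_inf_right _ h1
          _ ≤ _ := (fsum_ge hz2).trans (fsum_le_S z)
    · show eta x ⊓ (lam y ⊔ eta y ⊔ sSup _) ≤ _
      apply le_inf3
      · rw [inf_comm]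
        exact (fsum_ge (comm_mem hz)).trans (fsum_le_S z)
      · exact (fh_add he hz).trans (le_sup_right.trans le_sup_left)
      · rintro t ⟨c, d, hy, rfl⟩
        obtain ⟨u, hu, hz2⟩ := assoc1 (comm_mem hy) hz
        have h1 : eta x ⊓ eta d ≤ eta u := fh_add he hu
        calc eta x ⊓ (lam c ⊓ eta d) = lam c ⊓ (eta x ⊓ eta d) := by
              rw [inf_left_comm]
          _ ≤ lam c ⊓ eta u := inf_le_inf_left _ h1
          _ ≤ _ := (fsum_ge (comm_mem hz2)).trans (fsum_le_S z)
    · rintro t ⟨a, b, hx, rfl⟩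
      show (lam a ⊓ eta b) ⊓ (lam y ⊔ eta y ⊔ sSup _) ≤ _
      apply le_inf3
      · obtain ⟨w, hw, hz2⟩ := assoc2 (comm_mem hx) hz
        have h1 : lam a ⊓ lam y ≤ lam w := fh_add hl hw
        have h2 : (lam a ⊓ eta b) ⊓ lam y ≤ lam w ⊓ eta b :=
          le_inf ((le_inf (inf_le_left.trans inf_le_left) inf_le_right).trans h1)
            (inf_le_left.trans inf_le_right)
        exact h2.trans ((fsum_ge (comm_mem hz2)).trans (fsum_le_S z))
      · obtain ⟨w, hw, hz2⟩ := assoc2 hx hz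
        have h1 : eta b ⊓ eta y ≤ eta w := fh_add he hw
        calc (lam a ⊓ eta b) ⊓ eta y = lam a ⊓ (eta b ⊓ eta y) := by rw [inf_assoc]
          _ ≤ lam a ⊓ eta w := inf_le_inf_left _ h1
          _ ≤ _ := (fsum_ge hz2).trans (fsum_le_S z)
      · rintro t ⟨c, d, hy, rfl⟩
        obtain ⟨u, hu, v, hv, hz2⟩ := medial hx hy hz
        have h1 : lam a ⊓ lam c ≤ lam u := fh_add hl hu
        have h2 : eta b ⊓ eta d ≤ eta v := fh_add he hv
        calc (lam a ⊓ eta b) ⊓ (lam c ⊓ eta d)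
            = (lam a ⊓ lam c) ⊓ (eta b ⊓ eta d) := inf_inf_inf_comm _ _ _ _
          _ ≤ lam u ⊓ eta v := inf_le_inf h1 h2
          _ ≤ _ := (fsum_ge hz2).trans (fsum_le_S z)
  · intro x y
    refine sup_le ?_ ?_
    · show lam x ⊔ eta x ⊔ sSup _ ≤ _
      refine sup_le (sup_le ?_ ?_) (sSup_le ?_)
      · exact (fh_mull hl x y).trans (le_sup_left.trans le_sup_left)
      · exact (fh_mull he x y).trans (le_sup_right.trans le_sup_left)
      · rintro t ⟨a, b, hx, rfl⟩
        have := mul_right_mem (z := y) hx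
        exact (inf_le_inf (fh_mull hl a y) (fh_mull he b y)).trans
          ((fsum_ge this).trans (fsum_le_S _))
    · show lam y ⊔ eta y ⊔ sSup _ ≤ _
      refine sup_le (sup_le ?_ ?_) (sSup_le ?_)
      · exact (fh_mulr hl x y).trans (le_sup_left.trans le_sup_left)
      · exact (fh_mulr he x y).trans (le_sup_right.trans le_sup_left)
      · rintro t ⟨a, b, hy, rfl⟩
        have := mul_left_mem (y := x) hy
        exact (inf_le_inf (fh_mulr hl x a) (fh_mulr he x b)).trans
          ((fsum_ge this).trans (fsum_le_S _))

/-- Key pointwise bound used for `fprod (S λ η) (S μ η) ≤ η`. -/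
lemma S_prod_bound (hl : IsFuzzyHyperideal lam) (hm : IsFuzzyHyperideal mu)
    (he : IsFuzzyHyperideal eta) (hle : lam ⊓ mu ≤ eta) (y z : R) :
    S lam eta y ⊓ S mu eta z ≤ eta (mul y z) := by
  have base : ∀ a c : R, lam a ⊓ mu c ≤ eta (mul a c) := fun a c =>
    (inf_le_inf (fh_mull hl a c) (fh_mulr hm a c)).trans (hle (mul a c))
  show (lam y ⊔ eta y ⊔ sSup _) ⊓ S mu eta z ≤ _
  apply inf3_le
  · show lam y ⊓ (mu z ⊔ eta z ⊔ sSup _) ≤ _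
    apply le_inf3
    · exact base y z
    · exact inf_le_right.trans (fh_mulr he y z)
    · rintro t ⟨c, d, hzm, rfl⟩
      have hmem := mul_left_mem (y := y) hzm
      have h1 : lam y ⊓ mu c ≤ eta (mul y c) := base y c
      have h2 : eta d ≤ eta (mul y d) := fh_mulr he y d
      refine le_trans ?_ (fh_add he hmem)
      calc lam y ⊓ (mu c ⊓ eta d) = (lam y ⊓ mu c) ⊓ eta d := by rw [inf_assoc]
        _ ≤ _ := inf_le_inf h1 h2
  · show eta y ⊓ (mu z ⊔ eta z ⊔ sSup _) ≤ _
    apply le_inf3 <;> [skip; skip; rintro t ht] <;>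
      exact inf_le_left.trans (fh_mull he y z)
  · rintro t ⟨a, b, hym, rfl⟩
    show (lam a ⊓ eta b) ⊓ (mu z ⊔ eta z ⊔ sSup _) ≤ _
    apply le_inf3
    · have hmem := mul_right_mem (z := z) hym
      have h1 : lam a ⊓ mu z ≤ eta (mul a z) := base a z
      have h2 : eta b ≤ eta (mul b z) := fh_mull he b z
      refine le_trans (le_inf ?_ ?_) (fh_add he hmem)
      · exact (le_inf (inf_le_left.trans inf_le_left) inf_le_right).trans h1
      · exact (inf_le_left.trans inf_le_right).trans h2
    · exact inf_le_right.trans (fh_mulr he y z)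
    · rintro t ⟨c, d, hzm, rfl⟩
      have hyz : mul y z ∈ hadd (mul y c) (mul y d) := mul_left_mem hzm
      have hyc : mul y c ∈ hadd (mul a c) (mul b c) := mul_right_mem hym
      have hyd : mul y d ∈ hadd (mul a d) (mul b d) := mul_right_mem hym
      set m := (lam a ⊓ eta b) ⊓ (mu c ⊓ eta d) with hmessage
      have hac : m ≤ eta (mul a c) :=
        (le_inf (inf_le_left.trans inf_le_left)
          (inf_le_right.trans inf_le_left)).trans (base a c)
      have hbc : m ≤ eta (mul b c) :=
        (inf_le_left.trans inf_le_right).trans (fh_mull he b c)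
      have had : m ≤ eta (mul a d) :=
        (inf_le_right.trans inf_le_right).trans (fh_mulr he a d)
      have hbd : m ≤ eta (mul b d) :=
        (inf_le_left.trans inf_le_right).trans (fh_mull he b d)
      have h1 : m ≤ eta (mul y c) := (le_inf hac hbc).trans (fh_add he hyc)
      have h2 : m ≤ eta (mul y d) := (le_inf had hbd).trans (fh_add he hyd)
      exact (le_inf h1 h2).trans (fh_add he hyz)

lemma fprod_S_le (hl : IsFuzzyHyperideal lam) (hm : IsFuzzyHyperideal mu)
    (he : IsFuzzyHyperideal eta) (hle : lam ⊓ mu ≤ eta) :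
    fprod (S lam eta) (S mu eta) ≤ eta := by
  intro x
  refine sSup_le ?_
  rintro t ⟨l, hne, hx, rfl⟩
  have hmap : (l.map fun p => mul p.1 p.2) ≠ [] := by simpa using hne
  refine le_trans ?_ (hsum_bound he _ hmap x hx)
  refine le_iInf₂ fun b hb => ?_
  simp only [List.mem_map] at hb
  obtain ⟨p, hp, rfl⟩ := hb
  exact (iInf₂_le p hp).trans (S_prod_bound hl hm he hle p.1 p.2)

end SHRAux


open Semihyperring in
/-- in a fully idempotent semihyperring, every fuzzy irreducible hyperideal is
a fuzzy prime hyperideal. -/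
theorem fuzzyIrreducible_is_fuzzyPrime {R : Type*} [Semihyperring R]
    (h : FullyIdempotent R) (eta : R → unitInterval) (heta : IsFuzzyHyperideal eta)
    (hi : IsFuzzyIrreducibleHyperideal eta) :
    IsFuzzyPrimeHyperideal eta := by
  refine ⟨heta, ?_⟩
  intro lam mu hl hm hpr
  have hle : lam ⊓ mu ≤ eta := (SHRAux.inf_le_fprod h hl hm).trans hpr
  have hSl := SHRAux.S_fuzzy hl heta
  have hSm := SHRAux.S_fuzzy hm heta
  have heq : SHRAux.S lam eta ⊓ SHRAux.S mu eta = eta := by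
    refine le_antisymm ?_ (le_inf SHRAux.eta_le_S SHRAux.eta_le_S)
    exact (SHRAux.inf_le_fprod h hSl hSm).trans (SHRAux.fprod_S_le hl hm heta hle)
  rcases hi.2 _ _ hSl hSm heq with h1 | h2
  · exact Or.inl (h1 ▸ SHRAux.lam_le_S)
  · exact Or.inr (h2 ▸ SHRAux.lam_le_S)
end
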